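/- For an integer vector h = (h_0, h_1, …, h_d) and integers n ≥ d ≥ 1: h is the h-vector of a pure shifted simplicial complex of dimension d−1 on [n] if and only if h is the f-vector of a shifted multicomplex on W_{n−d} = {w_1,…,w_{n−d}} consisting of monomials of degree at most d (i.e. f_i of the multicomplex equals h_i for 0 ≤ i ≤ d). -/

import Mathlib

open Finset

noncomputable section

/-- The largest `a` with `C(a,ℓ) ≤ p` (searched within a sufficient bound). -/
def largestBinom (ℓ p : ℕ) : ℕ :=
  Nat.findGreatest (fun a => Nat.choose a ℓ ≤ p) (p + ℓ)

/-- The Macaulay lower shadow `∂^ℓ(p)`, computed from the `ℓ`-representation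
`p = C(a_ℓ,ℓ) + ⋯ + C(a_e,e)` via the greedy algorithm; `∂^ℓ(0) = 0`. -/
def mshadow : ℕ → ℕ → ℕ
  | 0, _ => 0
  | (ℓ+1), p =>
    if p = 0 then 0
    else Nat.choose (largestBinom (ℓ+1) p - 1) ℓ +
      mshadow ℓ (p - Nat.choose (largestBinom (ℓ+1) p) (ℓ+1))

/-- `(f 0, f 1, …, f d)` is an M-sequence (of nonnegative integers):
`f 0 = 1` and `∂^ℓ(f ℓ) ≤ f (ℓ-1)` for `1 ≤ ℓ ≤ d`. -/
def IsMSeqI (f : ℕ → ℤ) (d : ℕ) : Prop :=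
  f 0 = 1 ∧ (∀ ℓ ≤ d, 0 ≤ f ℓ) ∧
    ∀ ℓ, 1 ≤ ℓ → ℓ ≤ d → (mshadow ℓ (f ℓ).toNat : ℤ) ≤ f (ℓ - 1)

/-- A simplicial complex on `[n]`: a family of subsets closed under taking subsets. -/
def IsCplx {n : ℕ} (Δ : Set (Finset (Fin n))) : Prop :=
  ∀ F ∈ Δ, ∀ G, G ⊆ F → G ∈ Δ

/-- A shifted family on `[n]`: replacing a smaller element by a larger one stays in the family. -/
def ShiftedCplx {n : ℕ} (Δ : Set (Finset (Fin n))) : Prop :=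
  ∀ F ∈ Δ, ∀ r s : Fin n, r < s → r ∈ F → s ∉ F → insert s (F.erase r) ∈ Δ

/-- `F` is a facet (inclusion-maximal member) of `Δ`. -/
def IsFacet {n : ℕ} (Δ : Set (Finset (Fin n))) (F : Finset (Fin n)) : Prop :=
  F ∈ Δ ∧ ∀ G ∈ Δ, F ⊆ G → F = G

/-- `fvec Δ i` is the number of faces of cardinality `i` (that is, `f_{i-1}`). -/
def fvec {n : ℕ} (Δ : Set (Finset (Fin n))) (i : ℕ) : ℕ :=
  {F ∈ Δ | F.card = i}.ncard

/-- The `h`-vector of a `(d-1)`-complex, defined by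
`Σ h_j y^j = Σ f_{i-1} (1-y)^{d-i} y^i`, i.e. `h_j = Σ_{i≤j} (-1)^{j-i} C(d-i, j-i) f_{i-1}`. -/
def hvec {n : ℕ} (d : ℕ) (Δ : Set (Finset (Fin n))) (j : ℕ) : ℤ :=
  ∑ i ∈ Finset.range (j + 1),
    (-1 : ℤ) ^ (j - i) * (Nat.choose (d - i) (j - i) : ℤ) * (fvec Δ i : ℤ)

/-- The pure skeleton of `Δ` whose facets are the faces of cardinality `c`
(the pure `(c-1)`-skeleton `Δ^[c-1]`). -/
def pureSkel {n : ℕ} (Δ : Set (Finset (Fin n))) (c : ℕ) : Set (Finset (Fin n)) :=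
  {G | ∃ F ∈ Δ, F.card = c ∧ G ⊆ F}

/-- The `h̃`-triangle: `h̃_{i,j} = h_j(Δ^[i-1])`. -/
def htilde {n : ℕ} (Δ : Set (Finset (Fin n))) (i j : ℕ) : ℤ :=
  hvec i (pureSkel Δ i) j

/-- The `h`-triangle: `h_{i,j} = h̃_{i,j} - Σ_{ℓ≤j} h̃_{i+1,ℓ}`. -/
def htri {n : ℕ} (Δ : Set (Finset (Fin n))) (i j : ℕ) : ℤ :=
  htilde Δ i j - ∑ ℓ ∈ Finset.range (j + 1), htilde Δ (i + 1) ℓ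

/-- `σ(F)`: the longest terminal segment `{s, s+1, …, n}` contained in `F`
(empty if the last vertex is not in `F`). -/
def sigmaSeg {n : ℕ} (F : Finset (Fin n)) : Finset (Fin n) :=
  Finset.univ.filter (fun k => ∀ l, k ≤ l → l ∈ F)

/-- The degree of a monomial, given by its exponent vector. -/
def degM {k : ℕ} (m : Fin k → ℕ) : ℕ := ∑ i, m i

/-- The monomial `m` only involves the first `r` variables `w_1, …, w_r`. -/
def SupportedOn {k : ℕ} (r : ℕ) (m : Fin k → ℕ) : Prop :=
  ∀ i : Fin k, r ≤ (i : ℕ) → m i = 0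

/-- A multicomplex: a set of monomials closed under divisibility. -/
def IsMulticx {k : ℕ} (M : Set (Fin k → ℕ)) : Prop :=
  ∀ m ∈ M, ∀ m' : Fin k → ℕ, (∀ i, m' i ≤ m i) → m' ∈ M

/-- The monomial `w_j ⬝ (m / w_i)`. -/
def shiftMove {k : ℕ} (m : Fin k → ℕ) (i j : Fin k) : Fin k → ℕ :=
  fun t => if t = i then m i - 1 else if t = j then m j + 1 else m t

/-- A shifted multicomplex (on the first `r` variables). -/
def ShiftedMC {k : ℕ} (r : ℕ) (M : Set (Fin k → ℕ)) : Prop :=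
  ∀ m ∈ M, ∀ i j : Fin k, i < j → (j : ℕ) < r → 0 < m i → shiftMove m i j ∈ M

/-- Viewing `F` as the set of north-step positions of a lattice path, `xcoordS F p` is the
x-coordinate of the step at position `p`, i.e. the number of east steps strictly before `p`. -/
def xcoordS {k : ℕ} (F : Finset (Fin k)) (p : Fin k) : ℕ :=
  (Finset.univ.filter (fun j => j < p ∧ j ∉ F)).card

/-- `ψ = λ ∘ ν⁻¹` : the monomial on `W_r` associated to an `a`-subset `F` of `[r+a]`;
the exponent of `w_{i+1}` is the number of north steps with x-coordinate `i`. -/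
def psiM (r : ℕ) {k : ℕ} (F : Finset (Fin k)) : Fin k → ℕ :=
  fun i => if (i : ℕ) < r then (F.filter (fun p => xcoordS F p = (i : ℕ))).card else 0

/-- The partial sum `m_1 + ⋯ + m_i` of exponents strictly before position `i`. -/
def psum {k : ℕ} (m : Fin k → ℕ) (i : Fin k) : ℕ :=
  ∑ j ∈ Finset.univ.filter (fun j => j < i), m j

/-- `φ = ν ∘ λ⁻¹` : the set of north-step positions of the lattice path associated to a
monomial `m` on the first `r` variables (the remaining north steps lie in the last column). -/
def phiM (r : ℕ) {k : ℕ} (m : Fin k → ℕ) : Finset (Fin k) :=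
  Finset.univ.filter (fun p =>
    (∃ i : Fin k, (i : ℕ) < r ∧ psum m i + (i : ℕ) ≤ (p : ℕ) ∧
        (p : ℕ) < psum m i + m i + (i : ℕ)) ∨
    degM m + r ≤ (p : ℕ))

/-- The `a`-cone of `M` in the variable with (0-indexed) index `t`:
`{ w_{t+1}^ℓ · m : m ∈ M, deg m + ℓ < a }`. -/
def coneMC {k : ℕ} (t a : ℕ) (M : Set (Fin k → ℕ)) : Set (Fin k → ℕ) :=
  {p | ∃ m ∈ M, ∃ ℓ : ℕ, degM m + ℓ < a ∧
    p = fun i : Fin k => if (i : ℕ) = t then m i + ℓ else m i}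

/-- `Φ(M)`: the simplicial complex whose facets are the sets `φ(m)`, `m ∈ M`. -/
def PhiCplx (r : ℕ) {k : ℕ} (M : Set (Fin k → ℕ)) : Set (Finset (Fin k)) :=
  {G | ∃ m ∈ M, G ⊆ phiM r m}

/-- A `d`-metacomplex on `n`: a sequence of multicomplexes `M^[i]` on `{w_1,…,w_{n-i}}`
of degree `≤ i` with `C^i M^[i] ⊆ M^[i-1]`. -/
def IsMeta (n d : ℕ) (M : ℕ → Set (Fin n → ℕ)) : Prop :=
  (∀ i ≤ d, IsMulticx (M i) ∧ ∀ m ∈ M i, SupportedOn (n - i) m ∧ degM m ≤ i) ∧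
  (∀ i, 1 ≤ i → i ≤ d → coneMC (n - i) i (M i) ⊆ M (i - 1))

/-- A metacomplex is shifted if all its multicomplexes are. -/
def ShiftedMeta (n d : ℕ) (M : ℕ → Set (Fin n → ℕ)) : Prop :=
  ∀ i ≤ d, ShiftedMC (n - i) (M i)

/-- The `f`-triangle of a metacomplex: `f_{i,j}` = number of degree-`j` monomials in `M^[i]`. -/
def ftri (n : ℕ) (M : ℕ → Set (Fin n → ℕ)) (i j : ℕ) : ℕ :=
  {m ∈ M i | degM m = j}.ncard

/-- `Φ̄(𝓜) = ⋃_{i≤d} {φ^i(m) : m ∈ M^[i]}`. -/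
def PhiBar (n d : ℕ) (M : ℕ → Set (Fin n → ℕ)) : Set (Finset (Fin n)) :=
  {F | ∃ i ≤ d, ∃ m ∈ M i, F = phiM (n - i) m}

/-- `Ψ̄(Δ)`: the metacomplex with `M^[i] = {ψ(F) : F ∈ Δ, |F| = i}`. -/
def PsiBar (n : ℕ) (Δ : Set (Finset (Fin n))) : ℕ → Set (Fin n → ℕ) :=
  fun i => {p | ∃ F ∈ Δ, F.card = i ∧ p = psiM (n - i) F}

/-- The (finite) set of all monomials of degree `≤ t` in the variables `u_1, …, u_s`. -/
def monos (s t : ℕ) : Finset (Fin s → ℕ) :=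
  ((Finset.univ : Finset (Fin s → Fin (t + 1))).image
      (fun f => fun i => ((f i : ℕ)))).filter (fun m => degM m ≤ t)

/-- An `M_{s,t}`-array: a positive-integer valued function on monomials of degree `≤ t`
in `u_1,…,u_s` satisfying conditions (1)–(3) of Definition 4.1. -/
def IsMArray (s t : ℕ) (q : (Fin s → ℕ) → ℕ) : Prop :=
  (∀ m, degM m ≤ t → 0 < q m) ∧
  (∀ m, degM m ≤ t → ∀ i j : Fin s, i < j → 0 < m i → q m ≤ q (shiftMove m i j)) ∧
  (∀ m, degM m = t → q m = 1) ∧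
  (∀ m, degM m < t → ∀ j : Fin s,
    mshadow (t - degM m) (q m) ≤ q (fun x => if x = j then m x + 1 else m x))

/-- An `M_{s,t}(h)`-composition of `r`: an `M_{s,t}`-array with `q^m ≥ h_{t - deg m}`
and `Σ_m q^m = r`. -/
def IsComposition (s t : ℕ) (h : ℕ → ℤ) (r : ℤ) (q : (Fin s → ℕ) → ℕ) : Prop :=
  IsMArray s t q ∧ (∀ m, degM m ≤ t → h (t - degM m) ≤ (q m : ℤ)) ∧
  (∑ m ∈ monos s t, (q m : ℤ)) = r

/-- `Σ_s 𝒟`: the sum of the `q^m` over monomials divisible by the last variable `u_s`. -/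
def SigmaLast (s t : ℕ) (q : (Fin s → ℕ) → ℕ) : ℕ :=
  ∑ m ∈ (monos s t).filter (fun m => ∃ i : Fin s, (i : ℕ) = s - 1 ∧ 0 < m i), q m

/-- `ρ_{s,t}(r;h) = min { Σ_s 𝒟 : 𝒟 an M_{s,t}(h)-composition of r }`. -/
def rho (s t : ℕ) (h : ℕ → ℤ) (r : ℤ) : ℕ :=
  sInf {v : ℕ | ∃ q, IsComposition s t h r q ∧ SigmaLast s t q = v}

/-- A minimal non-face of `Δ`. -/
def IsMinNonface {n : ℕ} (Δ : Set (Finset (Fin n))) (G : Finset (Fin n)) : Prop :=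
  G ∉ Δ ∧ ∀ G' ⊂ G, G' ∈ Δ

/-- The Alexander dual `Δ* = {F : [n]∖F ∉ Δ}`. -/
def dualCplx {n : ℕ} (Δ : Set (Finset (Fin n))) : Set (Finset (Fin n)) :=
  {F | Fᶜ ∉ Δ}

/-- `m_{ℓ,k}(Δ)`: the number of minimal non-faces `G` of `Δ` with `|G| = k` and
`max G = ℓ + k - 1` (vertices labelled `1, …, n`). -/
def mGen {n : ℕ} (Δ : Set (Finset (Fin n))) (ℓ k : ℕ) : ℕ :=
  {G : Finset (Fin n) | IsMinNonface Δ G ∧ G.card = k ∧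
    (∃ v ∈ G, (v : ℕ) + 1 = ℓ + k - 1) ∧ ∀ u ∈ G, (u : ℕ) + 1 ≤ ℓ + k - 1}.ncard

/-- `μ_{ℓ,k}(Δ)` (written `muGen Δ k ℓ`), defined by the recursion
`m_{ℓ,k} = μ_{ℓ,k} − Σ_{q=1}^{ℓ} μ_{q,k−1}`. -/
def muGen {n : ℕ} (Δ : Set (Finset (Fin n))) : ℕ → ℕ → ℤ
  | 0, ℓ => (mGen Δ ℓ 0 : ℤ)
  | (k+1), ℓ => (mGen Δ ℓ (k+1) : ℤ) + ∑ q ∈ Finset.Icc 1 ℓ, muGen Δ k q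

/-- A lattice path from `(0,0)` to `(n-a, a)`, as a word in `{N, E}` of length `n`
with exactly `a` letters `N` (`true` = north). -/
def NPath (n a : ℕ) : Type :=
  {L : Fin n → Bool // (Finset.univ.filter (fun i => L i = true)).card = a}

/-- `ν(L)`: the set of positions of the north steps of `L`. -/
def nuP {n a : ℕ} (L : NPath n a) : Finset (Fin n) :=
  Finset.univ.filter (fun i => L.1 i = true)

/-- The height of the path after step `p` (number of north steps at positions `≤ p`). -/
def heightAt {n a : ℕ} (L : NPath n a) (p : Fin n) : ℕ :=
  (Finset.univ.filter (fun i => i ≤ p ∧ L.1 i = true)).card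

/-- `L ≤ L'` iff `L` never goes above `L'`. -/
def PathLe {n a : ℕ} (L L' : NPath n a) : Prop :=
  ∀ p : Fin n, heightAt L p ≤ heightAt L' p

/-- An order ideal of the poset `𝓛_{r,a}` of lattice paths. -/
def IsOrderIdealP {n a : ℕ} (Q : Set (NPath n a)) : Prop :=
  ∀ L ∈ Q, ∀ L', PathLe L' L → L' ∈ Q

/-- The x-coordinate of the step of `L` at position `p`. -/
def xcoordP {n a : ℕ} (L : NPath n a) (p : Fin n) : ℕ :=
  (Finset.univ.filter (fun j => j < p ∧ L.1 j = false)).card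

/-- `λ(L)`: the monomial `∏ w_i^{λ_i(L)}`, where `λ_i(L)` is the number of north steps
of `L` with x-coordinate `i - 1`. -/
def lamP (r : ℕ) {n a : ℕ} (L : NPath n a) : Fin n → ℕ :=
  fun i => if (i : ℕ) < r then
    (Finset.univ.filter (fun p => L.1 p = true ∧ xcoordP L p = (i : ℕ))).card
  else 0

/-! ### Auxiliary development -/

open scoped Classical

section AuxDev

variable {n d : ℕ}

private lemma filter_lt_card (p : Fin n) :
    ((Finset.univ : Finset (Fin n)).filter (fun j => j < p)).card = (p : ℕ) := by
  rw [show (Finset.univ.filter (fun j => j < p)) = Finset.Iio p by ext j; simp]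
  exact Fin.card_Iio p

private lemma xc_mono (F : Finset (Fin n)) {p q : Fin n} (h : p ≤ q) :
    xcoordS F p ≤ xcoordS F q := by
  apply Finset.card_le_card
  intro j hj
  simp only [Finset.mem_filter, Finset.mem_univ, true_and] at *
  exact ⟨lt_of_lt_of_le hj.1 h, hj.2⟩

private lemma xc_congr (F G : Finset (Fin n)) (p : Fin n)
    (h : ∀ j, j < p → (j ∈ F ↔ j ∈ G)) : xcoordS F p = xcoordS G p := by
  unfold xcoordS
  congr 1
  ext j
  simp only [Finset.mem_filter, Finset.mem_univ, true_and]
  exact and_congr_right fun hj => not_congr (h j hj)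

private lemma pos_split (F : Finset (Fin n)) (p : Fin n) :
    (p : ℕ) = xcoordS F p + (F.filter (fun j => j < p)).card := by
  have h1 : (Finset.univ.filter (fun j : Fin n => j < p)) =
      (Finset.univ.filter (fun j : Fin n => j < p ∧ j ∉ F)) ∪ (F.filter (fun j => j < p)) := by
    ext j; simp only [Finset.mem_filter, Finset.mem_univ, true_and, Finset.mem_union]; tauto
  have h2 : Disjoint (Finset.univ.filter (fun j : Fin n => j < p ∧ j ∉ F))
      (F.filter (fun j => j < p)) := by
    rw [Finset.disjoint_left]
    intro a ha hb
    simp only [Finset.mem_filter, Finset.mem_univ, true_and] at ha hb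
    exact ha.2 hb.1
  have h3 := filter_lt_card p
  rw [h1, Finset.card_union_of_disjoint h2] at h3
  rw [xcoordS]
  omega

private lemma compl_card (F : Finset (Fin n)) :
    ((Finset.univ : Finset (Fin n)).filter (fun j => j ∉ F)).card = n - F.card := by
  have := Finset.card_filter_add_card_filter_not (s := (Finset.univ : Finset (Fin n)))
    (p := fun j => j ∈ F)
  simp only [Finset.filter_mem_eq_inter, Finset.univ_inter, Finset.card_univ,
    Fintype.card_fin] at this
  omega

private lemma xc_le (F : Finset (Fin n)) (p : Fin n) : xcoordS F p ≤ n - F.card := by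
  rw [← compl_card]
  apply Finset.card_le_card
  intro j hj
  simp only [Finset.mem_filter, Finset.mem_univ, true_and] at *
  exact hj.2

/-- strict bound: if some `s > r` lies outside `F`, the x-coordinate of `r` is
strictly less than the number of east steps. -/
private lemma xc_lt (F : Finset (Fin n)) {r s : Fin n} (hs : s ∉ F) (hrs : r < s) :
    xcoordS F r < n - F.card := by
  rw [← compl_card]
  have hsub : (Finset.univ.filter (fun j : Fin n => j < r ∧ j ∉ F)) ⊆
      ((Finset.univ.filter (fun j : Fin n => j ∉ F)).erase s) := by
    intro j hj
    simp only [Finset.mem_filter, Finset.mem_univ, true_and, Finset.mem_erase] at *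
    exact ⟨fun h => absurd hrs (by rw [← h]; exact not_lt.2 hj.1.le), hj.2⟩
  have hcard := Finset.card_le_card hsub
  have hmem : s ∈ Finset.univ.filter (fun j : Fin n => j ∉ F) := by
    simp [hs]
  have := Finset.card_erase_of_mem hmem
  have hpos : 0 < (Finset.univ.filter (fun j : Fin n => j ∉ F)).card :=
    Finset.card_pos.2 ⟨s, hmem⟩
  unfold xcoordS
  omega

private lemma xc_succ_mem (F : Finset (Fin n)) {r s : Fin n} (hr : r ∈ F)
    (hrs : (s : ℕ) = (r : ℕ) + 1) : xcoordS F s = xcoordS F r := by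
  unfold xcoordS
  congr 1
  ext j
  simp only [Finset.mem_filter, Finset.mem_univ, true_and, Fin.lt_def]
  constructor
  · rintro ⟨h1, h2⟩
    refine ⟨?_, h2⟩
    rcases Nat.lt_or_ge (j : ℕ) (r : ℕ) with h | h
    · exact h
    · exfalso; have : (j : ℕ) = (r : ℕ) := by omega
      have : j = r := Fin.ext this
      subst this; exact h2 hr
  · rintro ⟨h1, h2⟩; exact ⟨by omega, h2⟩

private lemma xc_succ_not (F : Finset (Fin n)) {r s : Fin n} (hr : r ∉ F)
    (hrs : (s : ℕ) = (r : ℕ) + 1) : xcoordS F s = xcoordS F r + 1 := by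
  unfold xcoordS
  have : (Finset.univ.filter (fun j : Fin n => j < s ∧ j ∉ F)) =
      insert r (Finset.univ.filter (fun j : Fin n => j < r ∧ j ∉ F)) := by
    ext j
    simp only [Finset.mem_filter, Finset.mem_univ, true_and, Finset.mem_insert, Fin.lt_def]
    constructor
    · rintro ⟨h1, h2⟩
      rcases Nat.lt_or_ge (j : ℕ) (r : ℕ) with h | h
      · exact Or.inr ⟨h, h2⟩
      · exact Or.inl (Fin.ext (by omega))
    · rintro (h | ⟨h1, h2⟩)
      · subst h; exact ⟨by omega, hr⟩
      · exact ⟨by omega, h2⟩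
  rw [this, Finset.card_insert_of_notMem (by simp)]

section Swap

variable {n : ℕ} {F : Finset (Fin n)} {r s : Fin n}

private lemma swap_card (hr : r ∈ F) (hs : s ∉ F) :
    (insert s (F.erase r)).card = F.card := by
  rw [Finset.card_insert_of_notMem (fun h => hs (Finset.mem_of_mem_erase h)),
    Finset.card_erase_of_mem hr]
  have : 0 < F.card := Finset.card_pos.2 ⟨r, hr⟩
  omega

private lemma swap_mem (hr : r ∈ F) (hs : s ∉ F) (j : Fin n) :
    j ∈ insert s (F.erase r) ↔ (j ∈ F ∧ j ≠ r) ∨ j = s := by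
  simp only [Finset.mem_insert, Finset.mem_erase]
  tauto

/-- the x-coordinate is unchanged below the swapped positions -/
private lemma swap_xc_low (hr : r ∈ F) (hs : s ∉ F) (hrs : (s : ℕ) = (r : ℕ) + 1)
    {q : Fin n} (hq : (q : ℕ) ≤ (r : ℕ)) :
    xcoordS (insert s (F.erase r)) q = xcoordS F q := by
  apply xc_congr
  intro j hj
  rw [swap_mem hr hs]
  have hjr : j ≠ r := by
    intro h; subst h; exact absurd hj (by rw [Fin.lt_def] at hj ⊢; omega)
  have hjs : j ≠ s := by
    intro h; subst h; rw [Fin.lt_def] at hj; omega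
  tauto

/-- the x-coordinate is unchanged above the swapped positions -/
private lemma swap_xc_high (hr : r ∈ F) (hs : s ∉ F) (hrs : (s : ℕ) = (r : ℕ) + 1)
    {q : Fin n} (hq : (s : ℕ) < (q : ℕ)) :
    xcoordS (insert s (F.erase r)) q = xcoordS F q := by
  unfold xcoordS
  have key : (Finset.univ.filter (fun j : Fin n => j < q ∧ j ∉ insert s (F.erase r))) =
      insert r ((Finset.univ.filter (fun j : Fin n => j < q ∧ j ∉ F)).erase s) := by
    ext j
    simp only [Finset.mem_filter, Finset.mem_univ, true_and, Finset.mem_insert,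
      Finset.mem_erase, swap_mem hr hs, Fin.lt_def]
    constructor
    · rintro ⟨h1, h2⟩
      by_cases hjr : j = r
      · exact Or.inl hjr
      · refine Or.inr ⟨fun h => ?_, h1, fun hjF => h2 (Or.inl ⟨hjF, hjr⟩)⟩
        subst h; exact h2 (Or.inr rfl)
    · rintro (h | ⟨h1, h2, h3⟩)
      · subst h
        refine ⟨by omega, ?_⟩
        rintro (⟨-, h⟩ | h)
        · exact h rfl
        · have := congrArg Fin.val h; omega
      · refine ⟨h2, ?_⟩
        rintro (⟨hjF, -⟩ | h)
        · exact h3 hjF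
        · exact h1 h
  rw [key]
  have hsm : s ∈ (Finset.univ.filter (fun j : Fin n => j < q ∧ j ∉ F)) := by
    simp only [Finset.mem_filter, Finset.mem_univ, true_and, Fin.lt_def]
    exact ⟨by omega, hs⟩
  have hrni : r ∉ (Finset.univ.filter (fun j : Fin n => j < q ∧ j ∉ F)).erase s := by
    simp only [Finset.mem_erase, Finset.mem_filter, Finset.mem_univ, true_and]
    rintro ⟨-, -, h⟩; exact h hr
  rw [Finset.card_insert_of_notMem hrni, Finset.card_erase_of_mem hsm]
  have : 0 < (Finset.univ.filter (fun j : Fin n => j < q ∧ j ∉ F)).card :=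
    Finset.card_pos.2 ⟨s, hsm⟩
  omega

/-- the moved north step gets x-coordinate one higher -/
private lemma swap_xc_s (hr : r ∈ F) (hs : s ∉ F) (hrs : (s : ℕ) = (r : ℕ) + 1) :
    xcoordS (insert s (F.erase r)) s = xcoordS F r + 1 := by
  have hrni : r ∉ insert s (F.erase r) := by
    rw [swap_mem hr hs]
    rintro (⟨-, h⟩ | h)
    · exact h rfl
    · have := congrArg Fin.val h; omega
  have h1 : xcoordS (insert s (F.erase r)) s = xcoordS (insert s (F.erase r)) r + 1 :=
    xc_succ_not _ hrni hrs
  rw [h1, swap_xc_low hr hs hrs (le_refl _)]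

/-- x-coordinates of unmoved north steps are unchanged -/
private lemma swap_xc_old (hr : r ∈ F) (hs : s ∉ F) (hrs : (s : ℕ) = (r : ℕ) + 1)
    {q : Fin n} (hqF : q ∈ F) (hqr : q ≠ r) :
    xcoordS (insert s (F.erase r)) q = xcoordS F q := by
  rcases Nat.lt_or_ge (r : ℕ) (q : ℕ) with h | h
  · have hqs : q ≠ s := fun hh => hs (hh ▸ hqF)
    have : (s : ℕ) < (q : ℕ) := by
      have := Fin.val_ne_of_ne hqs; omega
    exact swap_xc_high hr hs hrs this
  · have : (q : ℕ) ≤ (r : ℕ) := h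
    exact swap_xc_low hr hs hrs this

/-- The column sets after an elementary swap. -/
private lemma swap_col (hr : r ∈ F) (hs : s ∉ F) (hrs : (s : ℕ) = (r : ℕ) + 1) (i : ℕ) :
    (insert s (F.erase r)).filter
        (fun p => xcoordS (insert s (F.erase r)) p = i) =
      if i = xcoordS F r + 1 then
        insert s ((F.filter (fun p => xcoordS F p = i)).erase r)
      else (F.filter (fun p => xcoordS F p = i)).erase r := by
  ext p
  by_cases hps : p = s
  · subst hps
    simp only [Finset.mem_filter, swap_mem hr hs, Finset.mem_insert, Finset.mem_erase]
    rw [swap_xc_s hr hs hrs]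
    split_ifs with h
    · simp [h, hs]
    · simp only [Finset.mem_erase, Finset.mem_filter]
      constructor
      · rintro ⟨-, h2⟩; exact absurd h2.symm h
      · rintro ⟨-, hsF, -⟩; exact absurd hsF hs
  · constructor
    · intro hp
      simp only [Finset.mem_filter] at hp
      obtain ⟨hp1, hp2⟩ := hp
      rw [swap_mem hr hs] at hp1
      rcases hp1 with ⟨hpF, hpr⟩ | h
      · rw [swap_xc_old hr hs hrs hpF hpr] at hp2
        have hmem : p ∈ (F.filter (fun p => xcoordS F p = i)).erase r := by
          simp only [Finset.mem_erase, Finset.mem_filter]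
          exact ⟨hpr, hpF, hp2⟩
        split_ifs <;> simp [hmem]
      · exact absurd h hps
    · intro hp
      have hmem : p ∈ (F.filter (fun p => xcoordS F p = i)).erase r := by
        split_ifs at hp with h
        · rcases Finset.mem_insert.1 hp with h' | h'
          · exact absurd h' hps
          · exact h'
        · exact hp
      simp only [Finset.mem_erase, Finset.mem_filter] at hmem
      obtain ⟨hpr, hpF, hpxc⟩ := hmem
      simp only [Finset.mem_filter]
      rw [swap_mem hr hs, swap_xc_old hr hs hrs hpF hpr]
      exact ⟨Or.inl ⟨hpF, hpr⟩, hpxc⟩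

/-- Column cardinalities after an elementary swap. -/
private lemma swap_col_card (hr : r ∈ F) (hs : s ∉ F) (hrs : (s : ℕ) = (r : ℕ) + 1) (i : ℕ) :
    ((insert s (F.erase r)).filter
        (fun p => xcoordS (insert s (F.erase r)) p = i)).card =
      if i = xcoordS F r + 1 then (F.filter (fun p => xcoordS F p = i)).card + 1
      else if i = xcoordS F r then (F.filter (fun p => xcoordS F p = i)).card - 1
      else (F.filter (fun p => xcoordS F p = i)).card := by
  rw [swap_col hr hs hrs]
  by_cases h1 : i = xcoordS F r + 1
  · rw [if_pos h1, if_pos h1]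
    have hrn : r ∉ F.filter (fun p => xcoordS F p = i) := by
      simp only [Finset.mem_filter]
      rintro ⟨-, h⟩; omega
    rw [Finset.erase_eq_of_notMem hrn,
      Finset.card_insert_of_notMem (by simp [Finset.mem_filter]; intro h; exact absurd h hs)]
  · rw [if_neg h1, if_neg h1]
    by_cases h2 : i = xcoordS F r
    · rw [if_pos h2]
      have hrm : r ∈ F.filter (fun p => xcoordS F p = i) := by
        simp only [Finset.mem_filter]; exact ⟨hr, h2.symm⟩
      rw [Finset.card_erase_of_mem hrm]
    · rw [if_neg h2]
      congr 1
      apply Finset.erase_eq_of_notMem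
      simp only [Finset.mem_filter]
      rintro ⟨-, h⟩; exact h2 h.symm

end Swap

section PsiMoves

variable {n d : ℕ}

private lemma psi_swap_shift {F : Finset (Fin n)} {r s : Fin n} (hr : r ∈ F) (hs : s ∉ F)
    (hrs : (s:ℕ) = (r:ℕ)+1) {r0 : ℕ} {a b : Fin n} (ha : (a:ℕ) = xcoordS F r)
    (hb : (b:ℕ) = (a:ℕ)+1) (hbr : (b:ℕ) < r0) :
    psiM r0 (insert s (F.erase r)) = shiftMove (psiM r0 F) a b := by
  funext i
  have hcc := swap_col_card hr hs hrs (i:ℕ)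
  simp only [psiM, shiftMove]
  rw [hcc]
  by_cases hia : i = a
  · subst hia
    simp only [if_pos rfl]
    split_ifs <;> omega
  · have hva : (i:ℕ) ≠ (a:ℕ) := fun h => hia (Fin.ext h)
    rw [if_neg hia]
    by_cases hib : i = b
    · subst hib
      simp only [if_pos rfl]
      split_ifs <;> omega
    · have hvb : (i:ℕ) ≠ (b:ℕ) := fun h => hib (Fin.ext h)
      rw [if_neg hib]
      split_ifs <;> omega

private lemma psi_swap_drop {F : Finset (Fin n)} {r s : Fin n} (hr : r ∈ F) (hs : s ∉ F)
    (hrs : (s:ℕ) = (r:ℕ)+1) {r0 : ℕ} (hx : xcoordS F r + 1 = r0) (i : Fin n) :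
    psiM r0 (insert s (F.erase r)) i =
      if (i:ℕ) = xcoordS F r then psiM r0 F i - 1 else psiM r0 F i := by
  have hcc := swap_col_card hr hs hrs (i:ℕ)
  simp only [psiM]
  rw [hcc]
  split_ifs <;> omega

private lemma exists_top (F : Finset (Fin n)) (i : ℕ)
    (hne : 0 < (F.filter (fun p => xcoordS F p = i)).card) (hi : i < n - F.card) :
    ∃ r s : Fin n, r ∈ F ∧ s ∉ F ∧ (s:ℕ) = (r:ℕ)+1 ∧ xcoordS F r = i := by
  have hcol : (F.filter (fun p => xcoordS F p = i)).Nonempty := Finset.card_pos.1 hne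
  set col := F.filter (fun p => xcoordS F p = i) with hcoldef
  set r := col.max' hcol with hrdef
  have hrcol : r ∈ col := col.max'_mem hcol
  have hrF : r ∈ F := (Finset.mem_filter.1 hrcol).1
  have hrx : xcoordS F r = i := (Finset.mem_filter.1 hrcol).2
  have hex : ∃ j : Fin n, j ∉ F ∧ (r:ℕ) < (j:ℕ) := by
    by_contra hcon
    push_neg at hcon
    have hsub : (Finset.univ.filter (fun j : Fin n => j ∉ F)) ⊆
        Finset.univ.filter (fun j : Fin n => j < r ∧ j ∉ F) := by
      intro j hj
      simp only [Finset.mem_filter, Finset.mem_univ, true_and] at *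
      have h1 := hcon j hj
      refine ⟨?_, hj⟩
      rw [Fin.lt_def]
      rcases Nat.lt_or_ge (j:ℕ) (r:ℕ) with h | h
      · exact h
      · exfalso
        have : j = r := Fin.ext (by omega)
        subst this; exact hj hrF
    have hle := Finset.card_le_card hsub
    rw [compl_card] at hle
    unfold xcoordS at hrx
    omega
  obtain ⟨j, hjF, hjr⟩ := hex
  have hrn : (r:ℕ)+1 < n := by have := j.isLt; omega
  refine ⟨r, ⟨(r:ℕ)+1, hrn⟩, hrF, ?_, rfl, hrx⟩
  intro hsF
  have hmem : (⟨(r:ℕ)+1, hrn⟩ : Fin n) ∈ col := by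
    rw [hcoldef]
    apply Finset.mem_filter.2
    refine ⟨hsF, ?_⟩
    rw [xc_succ_mem F hrF (by simp)]
    exact hrx
  have := col.le_max' _ hmem
  rw [← hrdef, Fin.le_def] at this
  simp at this

private lemma exists_bot (F : Finset (Fin n)) (i : ℕ)
    (hne : 0 < (F.filter (fun p => xcoordS F p = i)).card) (hi : 0 < i) :
    ∃ r s : Fin n, r ∉ F ∧ s ∈ F ∧ (s:ℕ) = (r:ℕ)+1 ∧ xcoordS F s = i := by
  have hcol : (F.filter (fun p => xcoordS F p = i)).Nonempty := Finset.card_pos.1 hne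
  set col := F.filter (fun p => xcoordS F p = i) with hcoldef
  set s := col.min' hcol with hsdef
  have hscol : s ∈ col := col.min'_mem hcol
  have hsF : s ∈ F := (Finset.mem_filter.1 hscol).1
  have hsx : xcoordS F s = i := (Finset.mem_filter.1 hscol).2
  have hspos : 0 < (s:ℕ) := by
    by_contra hcon
    push_neg at hcon
    have : xcoordS F s = 0 := by
      unfold xcoordS
      rw [Finset.card_eq_zero]
      apply Finset.filter_eq_empty_iff.2
      intro j _
      rw [Fin.lt_def]
      omega
    omega
  have hrn : (s:ℕ) - 1 < n := by have := s.isLt; omega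
  set r : Fin n := ⟨(s:ℕ)-1, hrn⟩ with hr2
  have hsr : (s:ℕ) = (r:ℕ)+1 := by simp [hr2]; omega
  refine ⟨r, s, ?_, hsF, hsr, hsx⟩
  intro hrF
  have hmem : r ∈ col := by
    rw [hcoldef]
    apply Finset.mem_filter.2
    refine ⟨hrF, ?_⟩
    rw [← xc_succ_mem F hrF hsr]
    exact hsx
  have := col.min'_le _ hmem
  rw [← hsdef, Fin.le_def] at this
  omega

private lemma card_fiber_sum (F : Finset (Fin n)) (hF : F.card = d) :
    d = ∑ i ∈ Finset.range (n - d + 1), (F.filter (fun p => xcoordS F p = i)).card := by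
  conv_lhs => rw [← hF]
  apply Finset.card_eq_sum_card_fiberwise
  intro p hp
  apply Finset.mem_range.2
  have := xc_le F p
  rw [hF] at this
  omega

private lemma degM_psi (F : Finset (Fin n)) :
    degM (psiM (n-d) F) = ∑ i ∈ Finset.range (n-d), (F.filter (fun p => xcoordS F p = i)).card := by
  rw [degM]
  have h1 : ∑ i : Fin n, psiM (n-d) F i = ∑ i ∈ Finset.range n,
      (if i < n - d then (F.filter (fun p => xcoordS F p = i)).card else 0) := by
    rw [← Fin.sum_univ_eq_sum_range
      (fun i => if i < n - d then (F.filter (fun p => xcoordS F p = i)).card else 0) n]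
    rfl
  rw [h1, ← Finset.sum_subset (Finset.range_subset_range.2 (Nat.sub_le n d))]
  · apply Finset.sum_congr rfl
    intro i hi
    rw [if_pos (Finset.mem_range.1 hi)]
  · intro i _ hi
    rw [if_neg (fun h => hi (Finset.mem_range.2 h))]

private lemma degM_psi_add (F : Finset (Fin n)) (hF : F.card = d) :
    degM (psiM (n-d) F) + (F.filter (fun p => xcoordS F p = n - d)).card = d := by
  rw [degM_psi]
  have := card_fiber_sum F hF
  rw [Finset.sum_range_succ] at this
  omega

private lemma psi_supported (F : Finset (Fin n)) : SupportedOn (n-d) (psiM (n-d) F) :=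
  fun _ hi => if_neg (not_lt.2 hi)

private lemma sigma_eq_col (F : Finset (Fin n)) (hF : F.card = d) :
    sigmaSeg F = F.filter (fun p => xcoordS F p = n - d) := by
  ext p
  simp only [sigmaSeg, Finset.mem_filter, Finset.mem_univ, true_and]
  constructor
  · intro h
    have hpF : p ∈ F := h p (le_refl p)
    refine ⟨hpF, ?_⟩
    unfold xcoordS
    have heq : (Finset.univ.filter (fun j : Fin n => j < p ∧ j ∉ F)) =
        Finset.univ.filter (fun j : Fin n => j ∉ F) := by
      ext j
      simp only [Finset.mem_filter, Finset.mem_univ, true_and]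
      refine ⟨fun hj => hj.2, fun hj => ⟨?_, hj⟩⟩
      by_contra hcon
      exact hj (h j (not_lt.1 hcon))
    rw [heq, compl_card, hF]
  · rintro ⟨hpF, hxc⟩
    intro l hl
    by_contra hlF
    have hsub : (Finset.univ.filter (fun j : Fin n => j < p ∧ j ∉ F)) ⊆
        Finset.univ.filter (fun j : Fin n => j ∉ F) := by
      intro j hj
      simp only [Finset.mem_filter, Finset.mem_univ, true_and] at *
      exact hj.2
    have heq := Finset.eq_of_subset_of_card_le hsub (by
      rw [compl_card, hF]
      unfold xcoordS at hxc
      omega)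
    have hlmem : l ∈ Finset.univ.filter (fun j : Fin n => j < p ∧ j ∉ F) := by
      rw [heq]
      simp [hlF]
    simp only [Finset.mem_filter, Finset.mem_univ, true_and] at hlmem
    have h2 := hlmem.1
    rw [Fin.lt_def] at h2
    rw [Fin.le_def] at hl
    omega

private lemma sigma_subset (F : Finset (Fin n)) : sigmaSeg F ⊆ F := by
  intro p hp
  simp only [sigmaSeg, Finset.mem_filter, Finset.mem_univ, true_and] at hp
  exact hp p (le_refl p)

private lemma card_R (F : Finset (Fin n)) (hF : F.card = d) :
    (F \ sigmaSeg F).card = degM (psiM (n-d) F) := by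
  rw [Finset.card_sdiff_of_subset (sigma_subset F), sigma_eq_col F hF, hF]
  have := degM_psi_add F hF
  omega

end PsiMoves

section Bijection

variable {n d : ℕ}

private lemma col_eq_block (F : Finset (Fin n)) (hF : F.card = d) {i : ℕ} (hi : i ≤ n - d) :
    F.filter (fun p => xcoordS F p = i) =
      Finset.univ.filter (fun p : Fin n =>
        (i + ∑ t ∈ Finset.range i, (F.filter (fun q => xcoordS F q = t)).card) ≤ (p:ℕ) ∧
        (p:ℕ) < (i + ∑ t ∈ Finset.range i, (F.filter (fun q => xcoordS F q = t)).card) +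
          (F.filter (fun q => xcoordS F q = i)).card) := by
  set B := i + ∑ t ∈ Finset.range i, (F.filter (fun q => xcoordS F q = t)).card with hB
  set c := (F.filter (fun q => xcoordS F q = i)).card with hc
  -- step 1: col ⊆ block
  have step1 : ∀ p ∈ F.filter (fun p => xcoordS F p = i), B ≤ (p:ℕ) ∧ (p:ℕ) < B + c := by
    intro p hp
    simp only [Finset.mem_filter] at hp
    obtain ⟨hpF, hpx⟩ := hp
    have hsplit := pos_split F p
    rw [hpx] at hsplit
    -- fiberwise decomposition of the faces below p
    have hfib : (F.filter (fun j => j < p)).card =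
        ∑ t ∈ Finset.range (n - d + 1),
          ((F.filter (fun j => j < p)).filter (fun j => xcoordS F j = t)).card := by
      apply Finset.card_eq_sum_card_fiberwise
      intro q hq
      apply Finset.mem_range.2
      have := xc_le F q
      rw [hF] at this
      omega
    have hlow : ∀ t, t < i →
        ((F.filter (fun j => j < p)).filter (fun j => xcoordS F j = t)) =
          F.filter (fun q => xcoordS F q = t) := by
      intro t ht
      ext j
      simp only [Finset.mem_filter]
      constructor
      · rintro ⟨⟨h1, -⟩, h3⟩; exact ⟨h1, h3⟩
      · rintro ⟨h1, h2⟩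
        refine ⟨⟨h1, ?_⟩, h2⟩
        by_contra hcon
        have := xc_mono F (not_lt.1 hcon : p ≤ j)
        omega
    have hhigh : ∀ t, i < t →
        ((F.filter (fun j => j < p)).filter (fun j => xcoordS F j = t)) = ∅ := by
      intro t ht
      apply Finset.filter_eq_empty_iff.2
      intro j hj
      simp only [Finset.mem_filter] at hj
      have := xc_mono F hj.2.le
      omega
    have hmid : ((F.filter (fun j => j < p)).filter (fun j => xcoordS F j = i)).card ≤ c - 1 := by
      have hsub : ((F.filter (fun j => j < p)).filter (fun j => xcoordS F j = i)) ⊆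
          (F.filter (fun q => xcoordS F q = i)).erase p := by
        intro j hj
        simp only [Finset.mem_filter, Finset.mem_erase] at *
        exact ⟨fun h => absurd (h ▸ hj.1.2) (lt_irrefl p), hj.1.1, hj.2⟩
      have := Finset.card_le_card hsub
      have hpm : p ∈ F.filter (fun q => xcoordS F q = i) := Finset.mem_filter.2 ⟨hpF, hpx⟩
      rw [Finset.card_erase_of_mem hpm] at this
      omega
    have hcpos : 0 < c := Finset.card_pos.2 ⟨p, Finset.mem_filter.2 ⟨hpF, hpx⟩⟩
    -- compute the sum
    have hsum : ∑ t ∈ Finset.range (n - d + 1),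
          ((F.filter (fun j => j < p)).filter (fun j => xcoordS F j = t)).card =
        ((F.filter (fun j => j < p)).filter (fun j => xcoordS F j = i)).card +
          ∑ t ∈ Finset.range i, (F.filter (fun q => xcoordS F q = t)).card := by
      rw [← Finset.add_sum_erase _ _ (Finset.mem_range.2 (by omega : i < n - d + 1))]
      congr 1
      rw [show ∑ t ∈ Finset.range i, (F.filter (fun q => xcoordS F q = t)).card =
          ∑ t ∈ Finset.range i,
            ((F.filter (fun j => j < p)).filter (fun j => xcoordS F j = t)).card from
        Finset.sum_congr rfl (fun t ht => by rw [hlow t (Finset.mem_range.1 ht)])]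
      apply (Finset.sum_subset ?_ ?_).symm
      · intro t ht
        simp only [Finset.mem_erase, Finset.mem_range] at *
        omega
      · intro t ht ht2
        simp only [Finset.mem_erase, Finset.mem_range] at ht
        simp only [Finset.mem_range] at ht2
        rcases Nat.lt_or_ge t i with h | h
        · omega
        · rw [hhigh t (by omega)]
          exact Finset.card_empty
    rw [hfib, hsum] at hsplit
    omega
  -- step 2: cardinality comparison
  have hsubset : F.filter (fun p => xcoordS F p = i) ⊆
      Finset.univ.filter (fun p : Fin n => B ≤ (p:ℕ) ∧ (p:ℕ) < B + c) := by
    intro p hp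
    simp only [Finset.mem_filter, Finset.mem_univ, true_and]
    exact step1 p hp
  have hcardle : (Finset.univ.filter (fun p : Fin n => B ≤ (p:ℕ) ∧ (p:ℕ) < B + c)).card ≤ c := by
    have hmap : ∀ p ∈ Finset.univ.filter (fun p : Fin n => B ≤ (p:ℕ) ∧ (p:ℕ) < B + c),
        (p:ℕ) ∈ Finset.Ico B (B + c) := by
      intro p hp
      simp only [Finset.mem_filter, Finset.mem_univ, true_and] at hp
      exact Finset.mem_Ico.2 hp
    have h := Finset.card_le_card_of_injOn (fun p : Fin n => (p:ℕ)) hmap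
      (fun p _ q _ h => Fin.ext h)
    rw [Nat.card_Ico] at h
    omega
  exact Finset.eq_of_subset_of_card_le hsubset (hcardle.trans (le_of_eq hc))

private lemma psi_inj_sub (F G : Finset (Fin n)) (hF : F.card = d) (hG : G.card = d)
    (hdn : d ≤ n) (h : psiM (n-d) F = psiM (n-d) G) : F ⊆ G := by
  have hc : ∀ i ≤ n - d, (F.filter (fun q => xcoordS F q = i)).card =
      (G.filter (fun q => xcoordS G q = i)).card := by
    intro i hi
    rcases Nat.lt_or_ge i (n - d) with hlt | hge
    · have hin : i < n := by omega
      have := congrFun h ⟨i, hin⟩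
      simp only [psiM] at this
      rw [if_pos (by exact hlt), if_pos (by exact hlt)] at this
      exact this
    · have hieq : i = n - d := by omega
      subst hieq
      have h1 := degM_psi_add F hF
      have h2 := degM_psi_add G hG
      rw [show degM (psiM (n-d) F) = degM (psiM (n-d) G) from congrArg degM h] at h1
      omega
  intro p hp
  have hi : xcoordS F p ≤ n - d := by have := xc_le F p; rw [hF] at this; omega
  have hpcol : p ∈ F.filter (fun q => xcoordS F q = xcoordS F p) :=
    Finset.mem_filter.2 ⟨hp, rfl⟩
  rw [col_eq_block F hF hi] at hpcol
  simp only [Finset.mem_filter, Finset.mem_univ, true_and] at hpcol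
  have hBeq : ∑ t ∈ Finset.range (xcoordS F p), (F.filter (fun q => xcoordS F q = t)).card =
      ∑ t ∈ Finset.range (xcoordS F p), (G.filter (fun q => xcoordS G q = t)).card :=
    Finset.sum_congr rfl (fun t ht => hc t (by have := Finset.mem_range.1 ht; omega))
  have hceq := hc (xcoordS F p) hi
  have hpblockG : p ∈ G.filter (fun q => xcoordS G q = xcoordS F p) := by
    rw [col_eq_block G hG hi]
    simp only [Finset.mem_filter, Finset.mem_univ, true_and]
    omega
  exact (Finset.mem_filter.1 hpblockG).1

private lemma psi_inj (F G : Finset (Fin n)) (hF : F.card = d) (hG : G.card = d)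
    (hdn : d ≤ n) (h : psiM (n-d) F = psiM (n-d) G) : F = G :=
  Finset.Subset.antisymm (psi_inj_sub F G hF hG hdn h) (psi_inj_sub G F hG hF hdn h.symm)

private lemma card_val_lt (m : ℕ) (hm : m ≤ n) :
    ((Finset.univ : Finset (Fin n)).filter (fun p : Fin n => (p:ℕ) < m)).card = m := by
  rw [show Finset.univ.filter (fun p : Fin n => (p:ℕ) < m) =
      Finset.attachFin (Finset.range m)
        (fun x hx => lt_of_lt_of_le (Finset.mem_range.1 hx) hm) from by
    ext p; simp [Finset.mem_attachFin]]
  rw [Finset.card_attachFin, Finset.card_range]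

private lemma tail_card (hdn : d ≤ n) :
    ((Finset.univ : Finset (Fin n)).filter (fun p : Fin n => n - d ≤ (p:ℕ))).card = d := by
  have h1 := Finset.card_filter_add_card_filter_not
    (s := (Finset.univ : Finset (Fin n))) (p := fun p => (p:ℕ) < n - d)
  have h2 : (Finset.univ.filter (fun p : Fin n => ¬ (p:ℕ) < n - d)) =
      Finset.univ.filter (fun p : Fin n => n - d ≤ (p:ℕ)) := by
    ext p; simp [not_lt]
  rw [h2, card_val_lt (n-d) (Nat.sub_le n d)] at h1
  simp only [Finset.card_univ, Fintype.card_fin] at h1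
  omega

private lemma psi_tail_zero (i : Fin n) :
    psiM (n-d) (Finset.univ.filter (fun p : Fin n => n - d ≤ (p:ℕ))) i = 0 := by
  set F0 := Finset.univ.filter (fun p : Fin n => n - d ≤ (p:ℕ)) with hF0
  simp only [psiM]
  by_cases hi : (i:ℕ) < n - d
  · rw [if_pos hi, Finset.card_eq_zero]
    apply Finset.filter_eq_empty_iff.2
    intro p hp
    have hpF : n - d ≤ (p:ℕ) := by
      rw [hF0] at hp
      simpa using hp
    have : xcoordS F0 p = n - d := by
      unfold xcoordS
      rw [show (Finset.univ.filter (fun j : Fin n => j < p ∧ j ∉ F0)) =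
          Finset.univ.filter (fun j : Fin n => (j:ℕ) < n - d) from by
        ext j
        simp only [Finset.mem_filter, Finset.mem_univ, true_and, hF0, not_le, Fin.lt_def]
        constructor
        · rintro ⟨-, h⟩; exact h
        · intro h; exact ⟨by omega, h⟩]
      exact card_val_lt (n-d) (Nat.sub_le n d)
    omega
  · rw [if_neg hi]

/-- lower an element of `F` by one position: the setup for applying the swap lemmas
in reverse. -/
private lemma lower_setup {F : Finset (Fin n)} {r s : Fin n} (hrF : r ∉ F) (hsF : s ∈ F)
    (hsr : (s:ℕ) = (r:ℕ)+1) :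
    r ∈ insert r (F.erase s) ∧ s ∉ insert r (F.erase s) ∧
      insert s ((insert r (F.erase s)).erase r) = F ∧
      (insert r (F.erase s)).card = F.card ∧
      xcoordS (insert r (F.erase s)) r = xcoordS F s - 1 := by
  have hrs : r ≠ s := fun h => by rw [h] at hsr; omega
  have hrnotin : r ∉ F.erase s := fun h => hrF (Finset.mem_of_mem_erase h)
  have h1 : r ∈ insert r (F.erase s) := Finset.mem_insert_self r _
  have h2 : s ∉ insert r (F.erase s) := by
    rw [Finset.mem_insert]
    rintro (h | h)
    · exact hrs h.symm
    · exact (Finset.mem_erase.1 h).1 rfl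
  have h3 : insert s ((insert r (F.erase s)).erase r) = F := by
    rw [Finset.erase_insert hrnotin, Finset.insert_erase hsF]
  have h4 : (insert r (F.erase s)).card = F.card := by
    rw [Finset.card_insert_of_notMem hrnotin, Finset.card_erase_of_mem hsF]
    have : 0 < F.card := Finset.card_pos.2 ⟨s, hsF⟩
    omega
  have h5 : xcoordS (insert r (F.erase s)) r = xcoordS F s - 1 := by
    have hxr : xcoordS (insert r (F.erase s)) r = xcoordS F r := by
      apply xc_congr
      intro j hj
      rw [Fin.lt_def] at hj
      have hjr : j ≠ r := fun h => by rw [h] at hj; omega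
      have hjs : j ≠ s := fun h => by rw [h] at hj; omega
      rw [Finset.mem_insert, Finset.mem_erase]
      constructor
      · rintro (h | h)
        · exact absurd h hjr
        · exact h.2
      · intro h; exact Or.inr ⟨hjs, h⟩
    rw [hxr, xc_succ_not F hrF hsr]
    omega
  exact ⟨h1, h2, h3, h4, h5⟩

private lemma add_unit (hdn : d ≤ n) : ∀ (k : ℕ) (F : Finset (Fin n)), F.card = d →
    degM (psiM (n-d) F) < d → ∀ t : ℕ, t < n - d → n - d - 1 - t = k →
    ∃ F' : Finset (Fin n), F'.card = d ∧
      ∀ i : Fin n, psiM (n-d) F' i =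
        (if (i:ℕ) = t then psiM (n-d) F i + 1 else psiM (n-d) F i) := by
  intro k
  induction k with
  | zero =>
    intro F hF hdeg t ht hk
    have htt : t = n - d - 1 := by omega
    have htail : 0 < (F.filter (fun p => xcoordS F p = n - d)).card := by
      have := degM_psi_add F hF
      omega
    obtain ⟨r, s, hrF, hsF, hsr, hxs⟩ := exists_bot F (n-d) htail (by omega)
    obtain ⟨h1, h2, h3, h4, h5⟩ := lower_setup hrF hsF hsr
    set G := insert r (F.erase s) with hG
    have hxGr : xcoordS G r = t := by omega
    have hdrop := fun i => psi_swap_drop h1 h2 hsr (r0 := n - d) (by omega) i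
    rw [h3] at hdrop
    refine ⟨G, by omega, ?_⟩
    intro i
    have hGpos : 0 < psiM (n-d) G ⟨t, by omega⟩ := by
      simp only [psiM]
      rw [if_pos (by simpa using ht)]
      apply Finset.card_pos.2
      exact ⟨r, Finset.mem_filter.2 ⟨h1, by simpa using hxGr⟩⟩
    have hd := hdrop i
    by_cases hit : (i:ℕ) = t
    · rw [if_pos hit]
      rw [if_pos (by omega)] at hd
      have hieq : i = (⟨t, by omega⟩ : Fin n) := Fin.ext (by simpa using hit)
      rw [hieq] at hd ⊢
      omega
    · rw [if_neg hit]
      rw [if_neg (by omega)] at hd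
      omega
  | succ k ih =>
    intro F hF hdeg t ht hk
    have ht1 : t + 1 < n - d := by omega
    obtain ⟨F₁, hF₁, hpsi1⟩ := ih F hF hdeg (t+1) ht1 (by omega)
    have hcolpos : 0 < (F₁.filter (fun p => xcoordS F₁ p = t + 1)).card := by
      have := hpsi1 ⟨t+1, by omega⟩
      simp only [psiM] at this
      rw [if_pos (by simpa using ht1), if_pos (by simpa using ht1)] at this
      try rw [if_pos rfl] at this
      omega
    obtain ⟨r, s, hrF, hsF, hsr, hxs⟩ := exists_bot F₁ (t+1) hcolpos (by omega)
    obtain ⟨h1, h2, h3, h4, h5⟩ := lower_setup hrF hsF hsr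
    set G := insert r (F₁.erase s) with hG
    have hxGr : xcoordS G r = t := by omega
    have hshift := psi_swap_shift h1 h2 hsr (r0 := n - d)
      (a := ⟨t, by omega⟩) (b := ⟨t+1, by omega⟩) (by simpa using hxGr.symm)
      (by simp) (by simpa using ht1)
    rw [h3] at hshift
    refine ⟨G, by omega, ?_⟩
    intro i
    have hGpos : 0 < psiM (n-d) G ⟨t, by omega⟩ := by
      simp only [psiM]
      rw [if_pos (by simpa using ht)]
      apply Finset.card_pos.2
      exact ⟨r, Finset.mem_filter.2 ⟨h1, by simpa using hxGr⟩⟩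
    have hsh := congrFun hshift i
    simp only [shiftMove] at hsh
    have hp1 := hpsi1 i
    by_cases hia : i = (⟨t, by omega⟩ : Fin n)
    · rw [if_pos hia] at hsh
      have hit : (i:ℕ) = t := by rw [hia]
      rw [if_pos hit]
      rw [if_neg (by omega)] at hp1
      rw [hia] at hsh hp1 ⊢
      omega
    · rw [if_neg hia] at hsh
      have hit : (i:ℕ) ≠ t := fun h => hia (Fin.ext (by simpa using h))
      rw [if_neg hit]
      by_cases hib : i = (⟨t+1, by omega⟩ : Fin n)
      · rw [if_pos hib] at hsh
        have hit1 : (i:ℕ) = t + 1 := by rw [hib]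
        rw [if_pos hit1] at hp1
        rw [hib] at hsh hp1 ⊢
        omega
      · rw [if_neg hib] at hsh
        have hit1 : (i:ℕ) ≠ t + 1 := fun h => hib (Fin.ext (by simpa using h))
        rw [if_neg hit1] at hp1
        omega

private lemma psi_surj_aux (hdn : d ≤ n) : ∀ (k : ℕ) (m : Fin n → ℕ), degM m = k →
    SupportedOn (n-d) m → degM m ≤ d →
    ∃ F : Finset (Fin n), F.card = d ∧ psiM (n-d) F = m := by
  intro k
  induction k with
  | zero =>
    intro m hdeg hsup _
    have hm0 : ∀ i, m i = 0 := by
      intro i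
      have := Finset.sum_eq_zero_iff.1 (hdeg : ∑ i, m i = 0) i (Finset.mem_univ i)
      exact this
    refine ⟨Finset.univ.filter (fun p : Fin n => n - d ≤ (p:ℕ)), tail_card hdn, ?_⟩
    funext i
    rw [psi_tail_zero i, hm0 i]
  | succ k ih =>
    intro m hdeg hsup hle
    have hex : ∃ i, 0 < m i := by
      by_contra hcon
      push_neg at hcon
      have : degM m = 0 := Finset.sum_eq_zero (fun i _ => by have := hcon i; omega)
      omega
    obtain ⟨i, hi⟩ := hex
    have hilt : (i:ℕ) < n - d := by
      by_contra hcon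
      have := hsup i (not_lt.1 hcon)
      omega
    set m' : Fin n → ℕ := fun j => if j = i then m j - 1 else m j with hm'
    have hdeg' : degM m' + 1 = degM m := by
      rw [degM, degM, ← Finset.add_sum_erase _ m' (Finset.mem_univ i),
        ← Finset.add_sum_erase _ m (Finset.mem_univ i)]
      have hrest : ∑ j ∈ Finset.univ.erase i, m' j = ∑ j ∈ Finset.univ.erase i, m j :=
        Finset.sum_congr rfl (fun j hj => by
          rw [hm']
          simp only
          rw [if_neg (Finset.mem_erase.1 hj).1])
      rw [hrest]
      have : m' i = m i - 1 := by rw [hm']; simp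
      omega
    have hsup' : SupportedOn (n-d) m' := by
      intro j hj
      have := hsup j hj
      rw [hm']
      simp only
      split_ifs <;> omega
    obtain ⟨F, hFcard, hFpsi⟩ := ih m' (by omega) hsup' (by omega)
    have hdegF : degM (psiM (n-d) F) < d := by rw [hFpsi]; omega
    obtain ⟨F', hF'card, hF'psi⟩ := add_unit hdn (n - d - 1 - (i:ℕ)) F hFcard hdegF
      (i:ℕ) hilt rfl
    refine ⟨F', hF'card, ?_⟩
    funext j
    have h2 := hF'psi j
    rw [hFpsi] at h2
    by_cases hji : j = i
    · have hv : (j:ℕ) = (i:ℕ) := congrArg Fin.val hji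
      rw [if_pos hv] at h2
      have hmi : m' j = m j - 1 := by simp only [hm', if_pos hji]
      have him : m j = m i := by rw [hji]
      rw [h2, hmi]
      omega
    · have hv : (j:ℕ) ≠ (i:ℕ) := fun h => hji (Fin.ext h)
      rw [if_neg hv] at h2
      have hmi : m' j = m j := by simp only [hm', if_neg hji]
      rw [h2, hmi]

private lemma psi_surj (hdn : d ≤ n) (m : Fin n → ℕ) (hsup : SupportedOn (n-d) m)
    (hle : degM m ≤ d) : ∃ F : Finset (Fin n), F.card = d ∧ psiM (n-d) F = m :=
  psi_surj_aux hdn (degM m) m rfl hsup hle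

end Bijection

section Moves

variable {n d : ℕ}

/-- Backward direction: the collection of `d`-sets whose `ψ`-image lies in a shifted
multicomplex is closed under (arbitrary) shift swaps. -/
private lemma swap_psi (hdn : d ≤ n) {M : Set (Fin n → ℕ)} (hmc : IsMulticx M)
    (hsh : ShiftedMC (n-d) M) :
    ∀ (k : ℕ) (F : Finset (Fin n)), F.card = d → psiM (n-d) F ∈ M →
    ∀ r s : Fin n, r < s → r ∈ F → s ∉ F → (s:ℕ) - (r:ℕ) = k →
    psiM (n-d) (insert s (F.erase r)) ∈ M := by
  intro k
  induction k using Nat.strong_induction_on with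
  | _ k ih =>
  intro F hF hM r s hrs hrF hsF hk
  have hrsv : (r:ℕ) < (s:ℕ) := hrs
  by_cases h1 : (s:ℕ) = (r:ℕ) + 1
  · -- elementary swap
    have hx : xcoordS F r < n - d := by
      have := xc_lt F hsF hrs
      rw [hF] at this
      exact this
    rcases Nat.lt_or_ge (xcoordS F r + 1) (n-d) with hlt | hge
    · rw [psi_swap_shift hrF hsF h1 (a := ⟨xcoordS F r, by omega⟩)
        (b := ⟨xcoordS F r + 1, by omega⟩) rfl rfl hlt]
      apply hsh _ hM
      · simp [Fin.lt_def]
      · exact hlt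
      · simp only [psiM]
        rw [if_pos (by exact hx)]
        exact Finset.card_pos.2 ⟨r, Finset.mem_filter.2 ⟨hrF, rfl⟩⟩
    · have hxeq : xcoordS F r + 1 = n - d := by omega
      have hdropzz := psi_swap_drop hrF hsF h1 hxeq
      exact hmc _ hM _ (fun i => by rw [hdropzz i]; split_ifs <;> omega)
  · -- composite swap
    have hk2 : 2 ≤ k := by omega
    have hs'lt : (r:ℕ) + 1 < n := by have := s.isLt; omega
    set s' : Fin n := ⟨(r:ℕ)+1, hs'lt⟩ with hs'
    have hrs' : r < s' := by rw [Fin.lt_def]; simp [hs']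
    have hs's : s' < s := by rw [Fin.lt_def]; simp [hs']; omega
    have hner : r ≠ s' := Fin.ne_of_lt hrs'
    have hnes : s' ≠ s := Fin.ne_of_lt hs's
    have hnrs : r ≠ s := Fin.ne_of_lt hrs
    by_cases h2 : s' ∈ F
    · have hstep1 := ih ((s:ℕ) - (s':ℕ)) (by simp [hs']; omega) F hF hM s' s hs's h2 hsF rfl
      have hcard1 : (insert s (F.erase s')).card = d := by rw [swap_card h2 hsF]; exact hF
      have hrF1 : r ∈ insert s (F.erase s') :=
        Finset.mem_insert.2 (Or.inr (Finset.mem_erase.2 ⟨hner, hrF⟩))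
      have hs'F1 : s' ∉ insert s (F.erase s') := by
        rw [Finset.mem_insert]
        rintro (h | h)
        · exact hnes h
        · exact (Finset.mem_erase.1 h).1 rfl
      have hstep2 := ih 1 (by omega) _ hcard1 hstep1 r s' hrs' hrF1 hs'F1 (by simp [hs'])
      have hseteq : insert s' ((insert s (F.erase s')).erase r) = insert s (F.erase r) := by
        ext a
        simp only [Finset.mem_insert, Finset.mem_erase]
        constructor
        · rintro (rfl | ⟨har, (rfl | ⟨has', haF⟩)⟩)
          · exact Or.inr ⟨fun h => hner h.symm, h2⟩
          · exact Or.inl rfl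
          · exact Or.inr ⟨har, haF⟩
        · rintro (rfl | ⟨har, haF⟩)
          · exact Or.inr ⟨fun h => hnrs h.symm, Or.inl rfl⟩
          · by_cases has' : a = s'
            · exact Or.inl has'
            · exact Or.inr ⟨har, Or.inr ⟨has', haF⟩⟩
      rw [hseteq] at hstep2
      exact hstep2
    · have hstep1 := ih 1 (by omega) F hF hM r s' hrs' hrF h2 (by simp [hs'])
      have hcard1 : (insert s' (F.erase r)).card = d := by rw [swap_card hrF h2]; exact hF
      have hs'F1 : s' ∈ insert s' (F.erase r) := Finset.mem_insert_self _ _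
      have hsF1 : s ∉ insert s' (F.erase r) := by
        rw [Finset.mem_insert]
        rintro (h | h)
        · exact hnes h.symm
        · exact hsF (Finset.mem_of_mem_erase h)
      have hstep2 := ih ((s:ℕ) - (s':ℕ)) (by simp [hs']; omega) _ hcard1 hstep1 s' s hs's
        hs'F1 hsF1 rfl
      have hseteq : (insert s' (F.erase r)).erase s' = F.erase r :=
        Finset.erase_insert (fun h => h2 (Finset.mem_of_mem_erase h))
      rw [hseteq] at hstep2
      exact hstep2

/-- Forward direction: an elementary shift of `ψF` is realized inside a swap-closed family. -/
private lemma shift_elem (hdn : d ≤ n) {𝒰 : Finset (Finset (Fin n))}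
    (hUcard : ∀ F ∈ 𝒰, F.card = d)
    (hUswap : ∀ F ∈ 𝒰, ∀ r s : Fin n, r < s → r ∈ F → s ∉ F → insert s (F.erase r) ∈ 𝒰)
    {F : Finset (Fin n)} (hFU : F ∈ 𝒰) {a b : Fin n} (hab : (b:ℕ) = (a:ℕ) + 1)
    (hb : (b:ℕ) < n - d) (hpos : 0 < psiM (n-d) F a) :
    ∃ F' ∈ 𝒰, psiM (n-d) F' = shiftMove (psiM (n-d) F) a b := by
  have ha : (a:ℕ) < n - d := by omega
  have hcol : 0 < (F.filter (fun p => xcoordS F p = (a:ℕ))).card := by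
    simp only [psiM] at hpos
    rw [if_pos ha] at hpos
    exact hpos
  obtain ⟨r, s, hrF, hsF, hsr, hxr⟩ := exists_top F (a:ℕ) hcol (by rw [hUcard F hFU]; omega)
  refine ⟨insert s (F.erase r), hUswap F hFU r s (by rw [Fin.lt_def]; omega) hrF hsF, ?_⟩
  exact psi_swap_shift hrF hsF hsr hxr.symm hab hb

/-- Forward direction: an elementary exponent decrement of `ψF` is realized. -/
private lemma drop_chain (hdn : d ≤ n) {𝒰 : Finset (Finset (Fin n))}
    (hUcard : ∀ F ∈ 𝒰, F.card = d)
    (hUswap : ∀ F ∈ 𝒰, ∀ r s : Fin n, r < s → r ∈ F → s ∉ F → insert s (F.erase r) ∈ 𝒰) :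
    ∀ (k : ℕ) (F : Finset (Fin n)), F ∈ 𝒰 → ∀ a : Fin n, (a:ℕ) < n - d →
    0 < psiM (n-d) F a → n - d - 1 - (a:ℕ) = k →
    ∃ F' ∈ 𝒰, psiM (n-d) F' = fun i => if i = a then psiM (n-d) F i - 1 else psiM (n-d) F i := by
  intro k
  induction k with
  | zero =>
    intro F hFU a ha hpos hk
    have hcol : 0 < (F.filter (fun p => xcoordS F p = (a:ℕ))).card := by
      simp only [psiM] at hpos
      rw [if_pos ha] at hpos
      exact hpos
    obtain ⟨r, s, hrF, hsF, hsr, hxr⟩ := exists_top F (a:ℕ) hcol (by rw [hUcard F hFU]; omega)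
    refine ⟨insert s (F.erase r), hUswap F hFU r s (by rw [Fin.lt_def]; omega) hrF hsF, ?_⟩
    funext i
    rw [psi_swap_drop hrF hsF hsr (by omega) i]
    by_cases hia : i = a
    · rw [if_pos hia, if_pos (by rw [hia, hxr]), hia]
    · rw [if_neg hia, if_neg (fun h : (i:ℕ) = xcoordS F r => hia (Fin.ext (by omega)))]
  | succ k ihk =>
    intro F hFU a ha hpos hk
    have hc : (a:ℕ) + 1 < n - d := by omega
    set c : Fin n := ⟨(a:ℕ)+1, by omega⟩ with hcdef
    have hac : c ≠ a := by
      intro h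
      have := congrArg Fin.val h
      simp [hcdef] at this
    obtain ⟨F₁, hF₁U, hF₁psi⟩ := shift_elem hdn hUcard hUswap hFU (a := a) (b := c)
      (by simp [hcdef]) (by simp [hcdef]; omega) hpos
    have hv : ∀ j, psiM (n-d) F₁ j = if j = a then psiM (n-d) F a - 1
        else if j = c then psiM (n-d) F c + 1 else psiM (n-d) F j := fun j => by
      rw [hF₁psi]; rfl
    have hposc : 0 < psiM (n-d) F₁ c := by
      rw [hv c, if_neg hac]
      simp
    obtain ⟨F₂, hF₂U, hF₂psi⟩ := ihk F₁ hF₁U c (by simp [hcdef]; omega) hposc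
      (by simp [hcdef]; omega)
    refine ⟨F₂, hF₂U, ?_⟩
    rw [hF₂psi]
    funext i
    by_cases hia : i = a
    · have hnic : ¬ i = c := fun h => hac (by rw [← h, hia])
      rw [if_neg hnic, hv i, if_pos hia, if_pos hia, hia]
    · by_cases hic : i = c
      · rw [if_pos hic, hv i, if_neg hia, if_neg hia, if_pos hic, hic]
        omega
      · rw [if_neg hic, hv i, if_neg hia, if_neg hic, if_neg hia]

/-- Forward direction: `ψ(𝒰)` is divisibility-closed. -/
private lemma sub_closed (hdn : d ≤ n) {𝒰 : Finset (Finset (Fin n))}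
    (hUcard : ∀ F ∈ 𝒰, F.card = d)
    (hUswap : ∀ F ∈ 𝒰, ∀ r s : Fin n, r < s → r ∈ F → s ∉ F → insert s (F.erase r) ∈ 𝒰) :
    ∀ (k : ℕ) (F : Finset (Fin n)), F ∈ 𝒰 → ∀ m' : Fin n → ℕ,
    (∀ i, m' i ≤ psiM (n-d) F i) → (∑ i, (psiM (n-d) F i - m' i)) = k →
    ∃ F' ∈ 𝒰, psiM (n-d) F' = m' := by
  intro k
  induction k with
  | zero =>
    intro F hFU m' hle hk
    refine ⟨F, hFU, ?_⟩
    funext i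
    have := Finset.sum_eq_zero_iff.1 hk i (Finset.mem_univ i)
    have := hle i
    omega
  | succ k ihk =>
    intro F hFU m' hle hk
    have hex : ∃ i, m' i < psiM (n-d) F i := by
      by_contra hcon
      push_neg at hcon
      have : ∀ i ∈ Finset.univ, psiM (n-d) F i - m' i = 0 := by
        intro i _
        have h1 := hcon i
        have h2 := hle i
        omega
      rw [Finset.sum_eq_zero this] at hk
      omega
    obtain ⟨i, hi⟩ := hex
    have hilt : (i:ℕ) < n - d := by
      by_contra hcon
      have : psiM (n-d) F i = 0 := psi_supported F i (not_lt.1 hcon)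
      omega
    obtain ⟨F₁, hF₁U, hF₁psi⟩ := drop_chain hdn hUcard hUswap (n - d - 1 - (i:ℕ)) F hFU i
      hilt (by omega) rfl
    have hle1 : ∀ j, m' j ≤ psiM (n-d) F₁ j := by
      intro j
      rw [hF₁psi]
      simp only []
      by_cases hji : j = i
      · rw [if_pos hji, hji]
        have := hle i
        omega
      · rw [if_neg hji]
        exact hle j
    have hsum1 : (∑ j, (psiM (n-d) F₁ j - m' j)) = k := by
      rw [← Finset.add_sum_erase _ (fun j => psiM (n-d) F₁ j - m' j) (Finset.mem_univ i)] at *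
      rw [← Finset.add_sum_erase _ (fun j => psiM (n-d) F j - m' j) (Finset.mem_univ i)] at hk
      have h1 : ∑ j ∈ Finset.univ.erase i, (psiM (n-d) F₁ j - m' j) =
          ∑ j ∈ Finset.univ.erase i, (psiM (n-d) F j - m' j) := by
        apply Finset.sum_congr rfl
        intro j hj
        rw [hF₁psi]
        simp only []
        rw [if_neg (Finset.mem_erase.1 hj).1]
      have h2 : psiM (n-d) F₁ i = psiM (n-d) F i - 1 := by
        rw [hF₁psi]
        simp
      rw [h1, h2]
      have := hle i
      omega
    exact ihk F₁ hF₁U m' hle1 hsum1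

end Moves

section Hvec

private lemma inner_identity (a b : ℕ) (hba : b ≤ a) :
    ∑ k ∈ Finset.range (b+1),
      (-1:ℤ)^(b-k) * (((a-k).choose (b-k) : ℕ) : ℤ) * ((a.choose k : ℕ) : ℤ) =
      if b = 0 then 1 else 0 := by
  have hterm : ∀ k ∈ Finset.range (b+1),
      (-1:ℤ)^(b-k) * (((a-k).choose (b-k) : ℕ) : ℤ) * ((a.choose k : ℕ) : ℤ) =
      ((a.choose b : ℕ) : ℤ) * ((-1:ℤ)^(b-k) * ((b.choose k : ℕ) : ℤ)) := by
    intro k hk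
    have hkb : k ≤ b := by have := Finset.mem_range.1 hk; omega
    have h := Nat.choose_mul (n := a) hkb
    have h2 : ((a.choose k : ℕ) : ℤ) * (((a-k).choose (b-k) : ℕ) : ℤ) =
        ((a.choose b : ℕ) : ℤ) * ((b.choose k : ℕ) : ℤ) := by
      exact_mod_cast congrArg (fun x : ℕ => (x : ℤ)) h.symm
    linear_combination (-1:ℤ)^(b-k) * h2
  rw [Finset.sum_congr rfl hterm, ← Finset.mul_sum]
  have hrefl := Finset.sum_range_reflect
    (fun k => (-1:ℤ)^(b-k) * ((b.choose k : ℕ) : ℤ)) (b+1)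
  have hswitch : ∑ k ∈ Finset.range (b+1), (-1:ℤ)^(b-k) * ((b.choose k : ℕ) : ℤ) =
      ∑ k ∈ Finset.range (b+1), (-1:ℤ)^k * ((b.choose k : ℕ) : ℤ) := by
    rw [← hrefl]
    apply Finset.sum_congr rfl
    intro k hk
    have hkb : k ≤ b := by have := Finset.mem_range.1 hk; omega
    rw [show b + 1 - 1 - k = b - k from by omega,
      show b - (b - k) = k from by omega, Nat.choose_symm hkb]
  rw [hswitch, Int.alternating_sum_range_choose]
  split_ifs with hb
  · subst hb; simp
  · ring

private lemma key_identity (d r j : ℕ) (hr : r ≤ d) (hj : j ≤ d) :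
    (∑ i ∈ Finset.range (j+1), (-1:ℤ)^(j-i) * (((d-i).choose (j-i) : ℕ) : ℤ) *
      (if r ≤ i then (((d-r).choose (i-r) : ℕ) : ℤ) else 0)) = if r = j then 1 else 0 := by
  rcases Nat.lt_or_ge j r with hlt | hge
  · rw [Finset.sum_eq_zero, if_neg (by omega)]
    intro i hi
    rw [if_neg (by have := Finset.mem_range.1 hi; omega)]
    ring
  · have hzero : ∑ i ∈ Finset.Ico 0 r, (-1:ℤ)^(j-i) * (((d-i).choose (j-i) : ℕ) : ℤ) *
        (if r ≤ i then (((d-r).choose (i-r) : ℕ) : ℤ) else 0) = 0 := by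
      apply Finset.sum_eq_zero
      intro i hi
      rw [if_neg (by have := (Finset.mem_Ico.1 hi).2; omega)]
      ring
    rw [Finset.range_eq_Ico, ← Finset.sum_Ico_consecutive _ (Nat.zero_le r) (by omega : r ≤ j+1),
      hzero, zero_add, Finset.sum_Ico_eq_sum_range,
      show j+1-r = (j-r)+1 from by omega]
    have hterm : ∀ k ∈ Finset.range ((j-r)+1),
        (-1:ℤ)^(j-(r+k)) * (((d-(r+k)).choose (j-(r+k)) : ℕ) : ℤ) *
          (if r ≤ r+k then (((d-r).choose (r+k-r) : ℕ) : ℤ) else 0) =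
        (-1:ℤ)^((j-r)-k) * ((((d-r)-k).choose ((j-r)-k) : ℕ) : ℤ) *
          (((d-r).choose k : ℕ) : ℤ) := by
      intro k hk
      rw [if_pos (Nat.le_add_right r k), show j-(r+k) = (j-r)-k from by omega,
        show d-(r+k) = (d-r)-k from by omega, show r+k-r = k from by omega]
    rw [Finset.sum_congr rfl hterm, inner_identity (d-r) (j-r) (by omega)]
    split_ifs <;> omega

private lemma upclosed_char {n : ℕ} (C A : Finset (Fin n)) (hA : A ⊆ C)
    (hup : ∀ a ∈ A, ∀ b ∈ C, a ≤ b → b ∈ A) :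
    A = C.filter (fun x => (C.filter (fun y => x < y)).card < A.card) := by
  ext x
  simp only [Finset.mem_filter]
  constructor
  · intro hx
    refine ⟨hA hx, ?_⟩
    have hsub : C.filter (fun y => x < y) ⊆ A.erase x := by
      intro y hy
      simp only [Finset.mem_filter, Finset.mem_erase] at *
      exact ⟨(ne_of_lt hy.2).symm, hup x hx y hy.1 hy.2.le⟩
    have h1 := Finset.card_le_card hsub
    rw [Finset.card_erase_of_mem hx] at h1
    have h2 : 0 < A.card := Finset.card_pos.2 ⟨x, hx⟩
    omega
  · rintro ⟨hxC, hcard⟩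
    by_contra hxA
    have hsub : A ⊆ C.filter (fun y => x < y) := by
      intro a ha
      simp only [Finset.mem_filter]
      refine ⟨hA ha, ?_⟩
      rcases lt_trichotomy x a with h | h | h
      · exact h
      · exact absurd (h ▸ ha) hxA
      · exact absurd (hup a ha x hxC h.le) hxA
    exact absurd (Finset.card_le_card hsub) (by omega)

private lemma upclosed_unique {n : ℕ} (C A B : Finset (Fin n)) (hA : A ⊆ C) (hB : B ⊆ C)
    (hupA : ∀ a ∈ A, ∀ b ∈ C, a ≤ b → b ∈ A)
    (hupB : ∀ a ∈ B, ∀ b ∈ C, a ≤ b → b ∈ B)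
    (hcard : A.card = B.card) : A = B := by
  rw [upclosed_char C A hA hupA, upclosed_char C B hB hupB, hcard]

private lemma not_mem_sigma {n : ℕ} {F : Finset (Fin n)} {r : Fin n} (h : r ∉ sigmaSeg F) :
    ∃ s : Fin n, r ≤ s ∧ s ∉ F := by
  by_contra hcon
  push_neg at hcon
  apply h
  simp only [sigmaSeg, Finset.mem_filter, Finset.mem_univ, true_and]
  exact fun l hl => hcon l hl

private lemma complete_face {n : ℕ} {𝒰 : Finset (Finset (Fin n))}
    (hUswap : ∀ F ∈ 𝒰, ∀ r s : Fin n, r < s → r ∈ F → s ∉ F → insert s (F.erase r) ∈ 𝒰)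
    (G : Finset (Fin n)) :
    ∀ (k : ℕ) (F : Finset (Fin n)), F ∈ 𝒰 → G ⊆ F →
      (∑ p ∈ F, (n - 1 - (p:ℕ))) ≤ k →
      ∃ F' ∈ 𝒰, F' \ sigmaSeg F' ⊆ G ∧ G ⊆ F' := by
  intro k
  induction k with
  | zero =>
    intro F hFU hGF hmeas
    by_cases hRG : F \ sigmaSeg F ⊆ G
    · exact ⟨F, hFU, hRG, hGF⟩
    · exfalso
      obtain ⟨r, hr, hrG⟩ := Finset.not_subset.1 hRG
      have hrF : r ∈ F := (Finset.mem_sdiff.1 hr).1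
      obtain ⟨s, hrs, hsF⟩ := not_mem_sigma (Finset.mem_sdiff.1 hr).2
      have hlt : r < s := lt_of_le_of_ne hrs (fun h => hsF (h ▸ hrF))
      have h1 := Finset.add_sum_erase F (fun p => n - 1 - (p:ℕ)) hrF
      have hw : n - 1 - (r:ℕ) > 0 := by
        have h2 := s.isLt
        rw [Fin.lt_def] at hlt
        omega
      omega
  | succ k ih =>
    intro F hFU hGF hmeas
    by_cases hRG : F \ sigmaSeg F ⊆ G
    · exact ⟨F, hFU, hRG, hGF⟩
    · obtain ⟨r, hr, hrG⟩ := Finset.not_subset.1 hRG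
      have hrF : r ∈ F := (Finset.mem_sdiff.1 hr).1
      obtain ⟨s, hrs, hsF⟩ := not_mem_sigma (Finset.mem_sdiff.1 hr).2
      have hlt : r < s := lt_of_le_of_ne hrs (fun h => hsF (h ▸ hrF))
      have hF'U := hUswap F hFU r s hlt hrF hsF
      have hGF' : G ⊆ insert s (F.erase r) := by
        intro a ha
        exact Finset.mem_insert.2 (Or.inr (Finset.mem_erase.2
          ⟨fun h => hrG (h ▸ ha), hGF ha⟩))
      apply ih (insert s (F.erase r)) hF'U hGF'
      have hsne : s ∉ F.erase r := fun h => hsF (Finset.mem_of_mem_erase h)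
      rw [Finset.sum_insert hsne]
      have h1 := Finset.add_sum_erase F (fun p => n - 1 - (p:ℕ)) hrF
      have h2 := s.isLt
      rw [Fin.lt_def] at hlt
      omega

private lemma interval_unique {n d : ℕ} {𝒰 : Finset (Finset (Fin n))}
    (hUcard : ∀ F ∈ 𝒰, F.card = d)
    {G F F' : Finset (Fin n)} (hF : F ∈ 𝒰) (hF' : F' ∈ 𝒰)
    (h1 : F \ sigmaSeg F ⊆ G) (h2 : G ⊆ F)
    (h1' : F' \ sigmaSeg F' ⊆ G) (h2' : G ⊆ F') : F = F' := by
  have hup : ∀ (H : Finset (Fin n)), H ∈ 𝒰 → H \ sigmaSeg H ⊆ G → G ⊆ H →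
      ∀ a ∈ H \ G, ∀ b ∈ Finset.univ.filter (fun x : Fin n => x ∉ G), a ≤ b → b ∈ H \ G := by
    intro H _ hRG hGH a ha b hb hab
    simp only [Finset.mem_sdiff] at ha ⊢
    simp only [Finset.mem_filter, Finset.mem_univ, true_and] at hb
    refine ⟨?_, hb⟩
    have hasig : a ∈ sigmaSeg H := by
      by_contra hcon
      exact ha.2 (hRG (Finset.mem_sdiff.2 ⟨ha.1, hcon⟩))
    simp only [sigmaSeg, Finset.mem_filter, Finset.mem_univ, true_and] at hasig
    exact hasig b hab
  have hsubC : ∀ (H : Finset (Fin n)), G ⊆ H →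
      H \ G ⊆ Finset.univ.filter (fun x : Fin n => x ∉ G) := by
    intro H _ a ha
    simp only [Finset.mem_filter, Finset.mem_univ, true_and]
    exact (Finset.mem_sdiff.1 ha).2
  have hkey : F \ G = F' \ G := by
    apply upclosed_unique (Finset.univ.filter (fun x : Fin n => x ∉ G)) _ _
      (hsubC F h2) (hsubC F' h2') (hup F hF h1 h2) (hup F' hF' h1' h2')
    rw [Finset.card_sdiff_of_subset h2, Finset.card_sdiff_of_subset h2', hUcard F hF, hUcard F' hF']
  have e1 : G ∪ (F \ G) = F := Finset.union_sdiff_of_subset h2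
  have e2 : G ∪ (F' \ G) = F' := Finset.union_sdiff_of_subset h2'
  rw [← e1, ← e2, hkey]

private lemma fvec_eq_card {n : ℕ} (Δ : Set (Finset (Fin n))) (i : ℕ)
    (S : Finset (Finset (Fin n))) (hS : ∀ G, G ∈ S ↔ G ∈ Δ ∧ G.card = i) :
    (fvec Δ i : ℤ) = ((S.card : ℕ) : ℤ) := by
  rw [fvec, ← Set.ncard_coe_finset]
  congr 2
  ext G
  simp [hS]

private lemma piece_card {n d : ℕ} {F : Finset (Fin n)} (hFd : F.card = d) (i : ℕ) :
    (Finset.univ.filter (fun G => F \ sigmaSeg F ⊆ G ∧ G ⊆ F ∧ G.card = i)).card =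
      if (F \ sigmaSeg F).card ≤ i then
        (d - (F \ sigmaSeg F).card).choose (i - (F \ sigmaSeg F).card) else 0 := by
  set R := F \ sigmaSeg F with hR
  set r := R.card with hr
  by_cases hri : r ≤ i
  · rw [if_pos hri]
    have hsig : sigmaSeg F ⊆ F := sigma_subset F
    have hsigcard : (sigmaSeg F).card = d - r := by
      rw [hr, hR, Finset.card_sdiff_of_subset hsig, hFd]
      have := Finset.card_le_card hsig
      rw [hFd] at this
      omega
    have hdisRT : ∀ T ⊆ sigmaSeg F, Disjoint R T := by
      intro T hT
      exact (Finset.sdiff_disjoint).mono_right hT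
    rw [← hsigcard, ← Finset.card_powersetCard (i - r) (sigmaSeg F)]
    apply Finset.card_bij' (fun G _ => G \ R) (fun T _ => R ∪ T)
    · intro G hG
      simp only [Finset.mem_filter, Finset.mem_univ, true_and] at hG
      obtain ⟨hRG, hGF, hGc⟩ := hG
      rw [Finset.mem_powersetCard]
      constructor
      · intro a ha
        have h1 : a ∈ F \ R := Finset.sdiff_subset_sdiff hGF (le_refl R) ha
        rw [hR, Finset.sdiff_sdiff_self_left] at h1
        exact (Finset.mem_inter.1 h1).2
      · rw [Finset.card_sdiff_of_subset hRG, hGc]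
    · intro T hT
      rw [Finset.mem_powersetCard] at hT
      simp only [Finset.mem_filter, Finset.mem_univ, true_and]
      refine ⟨Finset.subset_union_left, ?_, ?_⟩
      · apply Finset.union_subset
        · rw [hR]; exact Finset.sdiff_subset
        · exact hT.1.trans hsig
      · rw [Finset.card_union_of_disjoint (hdisRT T hT.1), hT.2, ← hr]
        omega
    · intro G hG
      simp only [Finset.mem_filter, Finset.mem_univ, true_and] at hG
      exact Finset.union_sdiff_of_subset hG.1
    · intro T hT
      rw [Finset.mem_powersetCard] at hT
      exact Finset.union_sdiff_cancel_left (hdisRT T hT.1)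
  · rw [if_neg hri]
    rw [Finset.card_eq_zero]
    apply Finset.filter_eq_empty_iff.2
    intro G _
    rintro ⟨hRG, -, hGc⟩
    have := Finset.card_le_card hRG
    omega

private lemma hvec_eq {n d : ℕ} {𝒰 : Finset (Finset (Fin n))}
    (hUcard : ∀ F ∈ 𝒰, F.card = d)
    (hUswap : ∀ F ∈ 𝒰, ∀ r s : Fin n, r < s → r ∈ F → s ∉ F → insert s (F.erase r) ∈ 𝒰)
    {j : ℕ} (hj : j ≤ d) :
    hvec d {G | ∃ F ∈ 𝒰, G ⊆ F} j =
      ((𝒰.filter (fun F => (F \ sigmaSeg F).card = j)).card : ℤ) := by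
  set Δ : Set (Finset (Fin n)) := {G | ∃ F ∈ 𝒰, G ⊆ F} with hΔ
  have hfaces : ∀ (i : ℕ) (G : Finset (Fin n)),
      G ∈ 𝒰.biUnion (fun F => Finset.univ.filter
        (fun G => F \ sigmaSeg F ⊆ G ∧ G ⊆ F ∧ G.card = i)) ↔ G ∈ Δ ∧ G.card = i := by
    intro i G
    simp only [Finset.mem_filter, Finset.mem_univ, true_and, Finset.mem_biUnion]
    constructor
    · rintro ⟨F, hFU, -, hGF, hGc⟩
      exact ⟨⟨F, hFU, hGF⟩, hGc⟩
    · rintro ⟨hGΔ, hGc⟩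
      rw [hΔ, Set.mem_setOf_eq] at hGΔ
      obtain ⟨F0, hF0U, hGF0⟩ := hGΔ
      obtain ⟨F', hF'U, hRG, hGF'⟩ := complete_face hUswap G
        (∑ p ∈ F0, (n - 1 - (p:ℕ))) F0 hF0U hGF0 (le_refl _)
      exact ⟨F', hF'U, hRG, hGF', hGc⟩
  have hdisj : ∀ i : ℕ, ∀ x ∈ 𝒰, ∀ y ∈ 𝒰, x ≠ y →
      Disjoint (Finset.univ.filter (fun G => x \ sigmaSeg x ⊆ G ∧ G ⊆ x ∧ G.card = i))
        (Finset.univ.filter (fun G => y \ sigmaSeg y ⊆ G ∧ G ⊆ y ∧ G.card = i)) := by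
    intro i x hx y hy hxy
    rw [Finset.disjoint_left]
    intro G hGx hGy
    simp only [Finset.mem_filter, Finset.mem_univ, true_and] at hGx hGy
    exact hxy (interval_unique hUcard hx hy hGx.1 hGx.2.1 hGy.1 hGy.2.1)
  have hfv : ∀ i : ℕ, (fvec Δ i : ℤ) = ∑ F ∈ 𝒰,
      ((if (F \ sigmaSeg F).card ≤ i then
        (d - (F \ sigmaSeg F).card).choose (i - (F \ sigmaSeg F).card) else 0 : ℕ) : ℤ) := by
    intro i
    rw [fvec_eq_card Δ i _ (hfaces i), Finset.card_biUnion (hdisj i)]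
    push_cast
    apply Finset.sum_congr rfl
    intro F hF
    rw [piece_card (hUcard F hF) i]
    split_ifs <;> simp
  rw [hvec]
  calc ∑ i ∈ Finset.range (j + 1),
        (-1 : ℤ) ^ (j - i) * (Nat.choose (d - i) (j - i) : ℤ) * (fvec Δ i : ℤ)
      = ∑ i ∈ Finset.range (j + 1), ∑ F ∈ 𝒰,
        (-1 : ℤ) ^ (j - i) * (Nat.choose (d - i) (j - i) : ℤ) *
          ((if (F \ sigmaSeg F).card ≤ i then
            (d - (F \ sigmaSeg F).card).choose (i - (F \ sigmaSeg F).card) else 0 : ℕ) : ℤ) := by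
        apply Finset.sum_congr rfl
        intro i _
        rw [hfv i, Finset.mul_sum]
    _ = ∑ F ∈ 𝒰, ∑ i ∈ Finset.range (j + 1),
        (-1 : ℤ) ^ (j - i) * (Nat.choose (d - i) (j - i) : ℤ) *
          ((if (F \ sigmaSeg F).card ≤ i then
            (d - (F \ sigmaSeg F).card).choose (i - (F \ sigmaSeg F).card) else 0 : ℕ) : ℤ) :=
        Finset.sum_comm
    _ = ∑ F ∈ 𝒰, (if (F \ sigmaSeg F).card = j then (1:ℤ) else 0) := by
        apply Finset.sum_congr rfl
        intro F hF
        have hrd : (F \ sigmaSeg F).card ≤ d := by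
          rw [← hUcard F hF]
          exact Finset.card_le_card Finset.sdiff_subset
        have := key_identity d ((F \ sigmaSeg F).card) j hrd hj
        rw [← this]
        apply Finset.sum_congr rfl
        intro i _
        rw [Nat.cast_ite]
        norm_num
    _ = ((𝒰.filter (fun F => (F \ sigmaSeg F).card = j)).card : ℤ) := by
        rw [Finset.card_filter]
        push_cast
        apply Finset.sum_congr rfl
        intro F _
        split_ifs <;> simp

end Hvec

section Assembly

variable {n d : ℕ}

private lemma shift_chain (hdn : d ≤ n) {𝒰 : Finset (Finset (Fin n))}
    (hUcard : ∀ F ∈ 𝒰, F.card = d)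
    (hUswap : ∀ F ∈ 𝒰, ∀ r s : Fin n, r < s → r ∈ F → s ∉ F → insert s (F.erase r) ∈ 𝒰) :
    ∀ (k : ℕ) (F : Finset (Fin n)), F ∈ 𝒰 → ∀ a b : Fin n, (a:ℕ) < (b:ℕ) →
    (b:ℕ) < n - d → 0 < psiM (n-d) F a → (b:ℕ) - (a:ℕ) = k →
    ∃ F' ∈ 𝒰, psiM (n-d) F' = shiftMove (psiM (n-d) F) a b := by
  intro k
  induction k using Nat.strong_induction_on with
  | _ k ih =>
  intro F hFU a b hab hb hpos hk
  by_cases h1 : (b:ℕ) = (a:ℕ) + 1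
  · exact shift_elem hdn hUcard hUswap hFU h1 hb hpos
  · set c : Fin n := ⟨(a:ℕ)+1, by omega⟩ with hcdef
    have hvca : (c:ℕ) = (a:ℕ)+1 := rfl
    obtain ⟨F₁, hF₁U, hF₁psi⟩ := shift_elem hdn hUcard hUswap hFU (b := c) hvca
      (by omega) hpos
    have hne_ac : a ≠ c := fun h => by have := congrArg Fin.val h; omega
    have hne_cb : c ≠ b := fun h => by have := congrArg Fin.val h; omega
    have hne_ab : a ≠ b := fun h => by have := congrArg Fin.val h; omega
    have hm1 : ∀ x, psiM (n-d) F₁ x = (if x = a then psiM (n-d) F a - 1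
        else if x = c then psiM (n-d) F c + 1 else psiM (n-d) F x) := fun x => by
      rw [hF₁psi]; rfl
    have hposc : 0 < psiM (n-d) F₁ c := by
      rw [hm1 c, if_neg (fun h => hne_ac h.symm)]
      simp
    obtain ⟨F₂, hF₂U, hF₂psi⟩ := ih ((b:ℕ) - (c:ℕ)) (by omega) F₁ hF₁U c b (by omega)
      hb hposc rfl
    refine ⟨F₂, hF₂U, ?_⟩
    rw [hF₂psi]
    funext t
    have hm2 : shiftMove (psiM (n-d) F₁) c b t = (if t = c then psiM (n-d) F₁ c - 1
        else if t = b then psiM (n-d) F₁ b + 1 else psiM (n-d) F₁ t) := rfl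
    have hm3 : shiftMove (psiM (n-d) F) a b t = (if t = a then psiM (n-d) F a - 1
        else if t = b then psiM (n-d) F b + 1 else psiM (n-d) F t) := rfl
    rw [hm2, hm3, hm1 t, hm1 c, hm1 b]
    have hca : c ≠ a := hne_ac.symm
    have hbc : b ≠ c := hne_cb.symm
    have hba : b ≠ a := hne_ab.symm
    by_cases hta : t = a <;> by_cases htc : t = c <;> by_cases htb : t = b <;>
      (try simp_all) <;> (try omega)

private lemma count_eq (hdn : d ≤ n) {𝒰 : Finset (Finset (Fin n))}
    (hUcard : ∀ F ∈ 𝒰, F.card = d) (i : ℕ) :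
    ({m ∈ (↑(𝒰.image (psiM (n-d))) : Set (Fin n → ℕ)) | degM m = i}.ncard : ℤ) =
      ((𝒰.filter (fun F => (F \ sigmaSeg F).card = i)).card : ℤ) := by
  have hset : {m ∈ (↑(𝒰.image (psiM (n-d))) : Set (Fin n → ℕ)) | degM m = i} =
      ↑((𝒰.image (psiM (n-d))).filter (fun m => degM m = i)) := by
    ext m
    simp
  rw [hset, Set.ncard_coe_finset, Finset.filter_image,
    Finset.card_image_of_injOn (fun F hF G hG hFG => by
      simp only [Finset.coe_filter, Set.mem_setOf_eq] at hF hG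
      exact psi_inj F G (hUcard F hF.1) (hUcard G hG.1) hdn hFG)]
  congr 2
  apply Finset.filter_congr
  intro F hF
  rw [card_R F (hUcard F hF)]

end Assembly

/-- (Theorem 2.1, (b) ⇔ (d)) An integer vector `(h_0,…,h_d)` is the
`h`-vector of a pure shifted `(d-1)`-complex on `[n]` iff it is the `f`-vector of a shifted
multicomplex on `W_{n-d}` of degree `≤ d`. -/
theorem hvector_pure_shifted_iff_fvector_shifted_multicomplex
    (n d : ℕ) (hd : 1 ≤ d) (hdn : d ≤ n) (h : ℕ → ℤ) :
    (∃ Δ : Set (Finset (Fin n)), IsCplx Δ ∧ ShiftedCplx Δ ∧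
      (∀ F, IsFacet Δ F → F.card = d) ∧ (∃ F ∈ Δ, F.card = d) ∧
      ∀ i ≤ d, hvec d Δ i = h i) ↔
    (∃ M : Set (Fin n → ℕ), M.Nonempty ∧
      (∀ m ∈ M, SupportedOn (n - d) m ∧ degM m ≤ d) ∧ IsMulticx M ∧ ShiftedMC (n - d) M ∧
      ∀ i ≤ d, ({m ∈ M | degM m = i}.ncard : ℤ) = h i) := by
  constructor
  · rintro ⟨Δ, hcplx, hshift, hfacets, ⟨F0, hF0Δ, hF0c⟩, hh⟩
    classical
    set 𝒰 : Finset (Finset (Fin n)) :=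
      Finset.univ.filter (fun F => F ∈ Δ ∧ F.card = d) with h𝒰
    have hUmem : ∀ F : Finset (Fin n), F ∈ 𝒰 ↔ F ∈ Δ ∧ F.card = d := by
      intro F; rw [h𝒰]; simp
    have hUcard : ∀ F ∈ 𝒰, F.card = d := fun F hF => ((hUmem F).1 hF).2
    have hUswap : ∀ F ∈ 𝒰, ∀ r s : Fin n, r < s → r ∈ F → s ∉ F →
        insert s (F.erase r) ∈ 𝒰 := by
      intro F hF r s hrs hr hs
      obtain ⟨hFΔ, hFc⟩ := (hUmem F).1 hF
      exact (hUmem _).2 ⟨hshift F hFΔ r s hrs hr hs, by rw [swap_card hr hs, hFc]⟩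
    have hΔeq : Δ = {G | ∃ F ∈ 𝒰, G ⊆ F} := by
      ext G
      simp only [Set.mem_setOf_eq]
      constructor
      · intro hG
        have hSne : (Finset.univ.filter (fun F => F ∈ Δ ∧ G ⊆ F)).Nonempty :=
          ⟨G, by simp [hG]⟩
        obtain ⟨F, hFS, hFmax⟩ := Finset.exists_max_image _ Finset.card hSne
        simp only [Finset.mem_filter, Finset.mem_univ, true_and] at hFS
        have hfacet : IsFacet Δ F := by
          refine ⟨hFS.1, fun H hH hFH => Finset.eq_of_subset_of_card_le hFH ?_⟩
          refine hFmax H ?_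
          simp only [Finset.mem_filter, Finset.mem_univ, true_and]
          exact ⟨hH, hFS.2.trans hFH⟩
        exact ⟨F, (hUmem F).2 ⟨hFS.1, hfacets F hfacet⟩, hFS.2⟩
      · rintro ⟨F, hFU, hGF⟩
        exact hcplx F ((hUmem F).1 hFU).1 G hGF
    have hF0U : F0 ∈ 𝒰 := (hUmem F0).2 ⟨hF0Δ, hF0c⟩
    refine ⟨↑(𝒰.image (psiM (n-d))), ?_, ?_, ?_, ?_, ?_⟩
    · exact ⟨psiM (n-d) F0, Finset.mem_coe.2 (Finset.mem_image_of_mem _ hF0U)⟩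
    · rintro m hm
      simp only [Finset.coe_image, Set.mem_image, Finset.mem_coe] at hm
      obtain ⟨F, hFU, rfl⟩ := hm
      refine ⟨psi_supported F, ?_⟩
      have := degM_psi_add F (hUcard F hFU)
      omega
    · rintro m hm m' hle
      simp only [Finset.coe_image, Set.mem_image, Finset.mem_coe] at hm ⊢
      obtain ⟨F, hFU, rfl⟩ := hm
      obtain ⟨F', hF'U, hF'psi⟩ := sub_closed hdn hUcard hUswap
        (∑ i, (psiM (n-d) F i - m' i)) F hFU m' hle rfl
      exact ⟨F', hF'U, hF'psi⟩
    · rintro m hm i j hij hjr hpos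
      simp only [Finset.coe_image, Set.mem_image, Finset.mem_coe] at hm ⊢
      obtain ⟨F, hFU, rfl⟩ := hm
      obtain ⟨F', hF'U, hF'psi⟩ := shift_chain hdn hUcard hUswap ((j:ℕ) - (i:ℕ)) F hFU i j
        hij hjr hpos rfl
      exact ⟨F', hF'U, hF'psi⟩
    · intro i hi
      rw [count_eq hdn hUcard i, ← hvec_eq hUcard hUswap hi, ← hΔeq]
      exact hh i hi
  · rintro ⟨M, hMne, hMsup, hMmc, hMsh, hcnt⟩
    classical
    set 𝒰 : Finset (Finset (Fin n)) :=
      Finset.univ.filter (fun F => F.card = d ∧ psiM (n-d) F ∈ M) with h𝒰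
    have hUmem : ∀ F : Finset (Fin n), F ∈ 𝒰 ↔ F.card = d ∧ psiM (n-d) F ∈ M := by
      intro F; rw [h𝒰]; simp
    have hUcard : ∀ F ∈ 𝒰, F.card = d := fun F hF => ((hUmem F).1 hF).1
    have hUswap : ∀ F ∈ 𝒰, ∀ r s : Fin n, r < s → r ∈ F → s ∉ F →
        insert s (F.erase r) ∈ 𝒰 := by
      intro F hF r s hrs hr hs
      obtain ⟨hFc, hFM⟩ := (hUmem F).1 hF
      refine (hUmem _).2 ⟨by rw [swap_card hr hs, hFc], ?_⟩
      exact swap_psi hdn hMmc hMsh ((s:ℕ) - (r:ℕ)) F hFc hFM r s hrs hr hs rfl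
    have hMeq : M = ↑(𝒰.image (psiM (n-d))) := by
      ext m
      simp only [Finset.coe_image, Set.mem_image, Finset.mem_coe]
      constructor
      · intro hm
        obtain ⟨F, hFc, hFpsi⟩ := psi_surj hdn m (hMsup m hm).1 (hMsup m hm).2
        exact ⟨F, (hUmem F).2 ⟨hFc, by rw [hFpsi]; exact hm⟩, hFpsi⟩
      · rintro ⟨F, hFU, rfl⟩
        exact ((hUmem F).1 hFU).2
    refine ⟨{G | ∃ F ∈ 𝒰, G ⊆ F}, ?_, ?_, ?_, ?_, ?_⟩
    · rintro F ⟨F', hF'U, hFF'⟩ G hGF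
      exact ⟨F', hF'U, hGF.trans hFF'⟩
    · rintro G ⟨F, hFU, hGF⟩ r s hrs hrG hsG
      by_cases hsF : s ∈ F
      · refine ⟨F, hFU, ?_⟩
        intro a ha
        rcases Finset.mem_insert.1 ha with rfl | ha'
        · exact hsF
        · exact hGF (Finset.mem_of_mem_erase ha')
      · have hrF : r ∈ F := hGF hrG
        refine ⟨insert s (F.erase r), hUswap F hFU r s hrs hrF hsF, ?_⟩
        intro a ha
        rcases Finset.mem_insert.1 ha with rfl | ha'
        · exact Finset.mem_insert_self _ _
        · have hmem := Finset.mem_erase.1 ha'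
          exact Finset.mem_insert.2 (Or.inr (Finset.mem_erase.2 ⟨hmem.1, hGF hmem.2⟩))
    · rintro F ⟨⟨F', hF'U, hFF'⟩, hFmax⟩
      rw [hFmax F' ⟨F', hF'U, subset_rfl⟩ hFF']
      exact hUcard F' hF'U
    · obtain ⟨m, hm⟩ := hMne
      obtain ⟨F, hFc, hFpsi⟩ := psi_surj hdn m (hMsup m hm).1 (hMsup m hm).2
      exact ⟨F, ⟨F, (hUmem F).2 ⟨hFc, by rw [hFpsi]; exact hm⟩, subset_rfl⟩, hFc⟩
    · intro i hi
      rw [hvec_eq hUcard hUswap hi, ← count_eq hdn hUcard i, ← hMeq]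
      exact hcnt i hi
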